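/- arXiv:2302.07773 — 11 statements merged into one kernel-verified Lean document; each statement's English description precedes it below -/
import Mathlib

section
/- Explicit solution family for the variance-modulated moment problem: Let d ≥ 1, m₀ ∈ ℝ^d, α ∈ ℝ^d with α ≠ 0, β > 0 and t₀ ∈ ℝ. Define σ(t) := β / (|α| cosh(β t + t₀)) and m(t) := m₀ + (α/|α|²) β (tanh(β t + t₀) − tanh(t₀)) for t ∈ ℝ. Then for every t: (i) σ(t) > 0 and m'(t) = σ(t)² α; (ii) the Euler–Lagrange system holds, i.e. d/dt (m'(t)/σ(t)²) = 0 and σ''(t) σ(t) − σ'(t)² = −|m'(t)|²; and (iii) the action density is constant: (|m'(t)|² + σ'(t)²)/σ(t)² = β². -/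
open Real

lemma my_hasDerivAt_tanh (x : ℝ) : HasDerivAt Real.tanh (1 / Real.cosh x ^ 2) x := by
  have h : HasDerivAt (fun y => Real.sinh y / Real.cosh y)
      ((Real.cosh x * Real.cosh x - Real.sinh x * Real.sinh x) / Real.cosh x ^ 2) x :=
    (Real.hasDerivAt_sinh x).div (Real.hasDerivAt_cosh x) (Real.cosh_pos x).ne'
  have heq : (fun y => Real.sinh y / Real.cosh y) = Real.tanh := by
    funext y; rw [Real.tanh_eq_sinh_div_cosh]
  rw [heq] at h
  convert h using 1
  have := Real.cosh_sq_sub_sinh_sq x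
  field_simp
  nlinarith [Real.cosh_pos x]

/-- Explicit solution family for the variance-modulated moment problem. -/
theorem stmt1 (d : ℕ) (hd : 1 ≤ d) (m₀ : EuclideanSpace ℝ (Fin d))
    (α : EuclideanSpace ℝ (Fin d)) (hα : α ≠ 0) (β t₀ : ℝ) (hβ : 0 < β)
    (m : ℝ → EuclideanSpace ℝ (Fin d)) (σ : ℝ → ℝ)
    (hσdef : ∀ t, σ t = β / (‖α‖ * Real.cosh (β * t + t₀)))
    (hmdef : ∀ t, m t = m₀ + ((β * (Real.tanh (β * t + t₀) - Real.tanh t₀)) / ‖α‖ ^ 2) • α) :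
    ∃ (m' : ℝ → EuclideanSpace ℝ (Fin d)) (σ' σ'' : ℝ → ℝ),
      (∀ t, HasDerivAt m (m' t) t) ∧
      (∀ t, HasDerivAt σ (σ' t) t) ∧
      (∀ t, HasDerivAt σ' (σ'' t) t) ∧
      (∀ t, 0 < σ t) ∧
      (∀ t, m' t = (σ t ^ 2) • α) ∧
      (∀ t, HasDerivAt (fun s => (σ s ^ 2)⁻¹ • m' s) (0 : EuclideanSpace ℝ (Fin d)) t) ∧
      (∀ t, σ'' t * σ t - (σ' t) ^ 2 = -‖m' t‖ ^ 2) ∧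
      (∀ t, (‖m' t‖ ^ 2 + (σ' t) ^ 2) / σ t ^ 2 = β ^ 2) := by
  have hA : (0:ℝ) < ‖α‖ := norm_pos_iff.mpr hα
  have hAne : ‖α‖ ≠ 0 := hA.ne'
  have hu : ∀ t : ℝ, HasDerivAt (fun s => β * s + t₀) β t := fun t => by
    simpa using ((hasDerivAt_id t).const_mul β).add_const t₀
  have hch : ∀ t : ℝ, (0:ℝ) < Real.cosh (β * t + t₀) := fun t => Real.cosh_pos _
  have hσpos : ∀ t, 0 < σ t := fun t => by
    rw [hσdef t]; positivity
  have hσ' : ∀ t, HasDerivAt σ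
      (-β^2 * Real.sinh (β*t+t₀) / (‖α‖ * Real.cosh (β*t+t₀)^2)) t := by
    intro t
    have hfun : σ = fun s => β / (‖α‖ * Real.cosh (β * s + t₀)) := funext hσdef
    rw [hfun]
    have h : HasDerivAt (fun s => β / (‖α‖ * Real.cosh (β * s + t₀)))
        ((0 * (‖α‖ * Real.cosh (β*t+t₀)) - β * (‖α‖ * (Real.sinh (β*t+t₀) * β)))
          / (‖α‖ * Real.cosh (β*t+t₀))^2) t :=
      (hasDerivAt_const t β).div (((hu t).cosh).const_mul ‖α‖)
        (by positivity)
    convert h using 1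
    have := (hch t).ne'
    field_simp
    ring
  have hσ'' : ∀ t, HasDerivAt
      (fun s => -β^2 * Real.sinh (β*s+t₀) / (‖α‖ * Real.cosh (β*s+t₀)^2))
      (-β^3 * (Real.cosh (β*t+t₀)^2 - 2 * Real.sinh (β*t+t₀)^2)
        / (‖α‖ * Real.cosh (β*t+t₀)^3)) t := by
    intro t
    have hnum : HasDerivAt (fun s => -β^2 * Real.sinh (β*s+t₀))
        (-β^2 * (Real.cosh (β*t+t₀) * β)) t := ((hu t).sinh).const_mul _
    have hden : HasDerivAt (fun s => ‖α‖ * Real.cosh (β*s+t₀)^2)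
        (‖α‖ * (2 * Real.cosh (β*t+t₀)^1 * (Real.sinh (β*t+t₀) * β))) t := by
      exact (((hu t).cosh).pow 2).const_mul ‖α‖
    have h := hnum.div hden (by positivity)
    refine h.congr_deriv ?_
    have hc := (hch t).ne'
    have hid := Real.cosh_sq_sub_sinh_sq (β*t+t₀)
    rw [eq_comm, div_eq_div_iff (mul_pos hA (pow_pos (hch t) 3)).ne' (pow_pos (mul_pos hA (pow_pos (hch t) 2)) 2).ne']
    ring_nf
  have hm' : ∀ t, HasDerivAt m ((σ t ^ 2) • α) t := by
    intro t
    have hfun : m = fun s => m₀ + ((β * (Real.tanh (β * s + t₀) - Real.tanh t₀)) / ‖α‖ ^ 2) • α :=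
      funext hmdef
    rw [hfun]
    have hf : HasDerivAt (fun s => (β * (Real.tanh (β * s + t₀) - Real.tanh t₀)) / ‖α‖ ^ 2)
        ((β * (1 / Real.cosh (β*t+t₀) ^ 2 * β)) / ‖α‖ ^ 2) t := by
      have ht : HasDerivAt (fun s => Real.tanh (β * s + t₀))
          (1 / Real.cosh (β*t+t₀) ^ 2 * β) t :=
        by have := (my_hasDerivAt_tanh (β*t+t₀)).comp t (hu t); exact this
      exact ((ht.sub_const _).const_mul β).div_const _
    have h := (hf.smul_const α).const_add m₀
    refine h.congr_deriv ?_
    congr 1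
    rw [hσdef t]
    have := (hch t).ne'
    field_simp
  refine ⟨fun t => (σ t ^ 2) • α,
    fun t => -β^2 * Real.sinh (β*t+t₀) / (‖α‖ * Real.cosh (β*t+t₀)^2),
    fun t => -β^3 * (Real.cosh (β*t+t₀)^2 - 2 * Real.sinh (β*t+t₀)^2)
        / (‖α‖ * Real.cosh (β*t+t₀)^3),
    hm', hσ', hσ'', hσpos, fun t => rfl, ?_, ?_, ?_⟩
  · intro t
    have heq : (fun s => (σ s ^ 2)⁻¹ • ((σ s ^ 2) • α)) = fun _ => α := by
      funext s
      rw [smul_smul, inv_mul_cancel₀ (pow_pos (hσpos s) 2).ne', one_smul]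
    rw [heq]
    exact hasDerivAt_const t α
  · intro t
    have hn : ‖(σ t ^ 2) • α‖ ^ 2 = σ t ^ 4 * ‖α‖ ^ 2 := by
      rw [norm_smul]
      simp [abs_of_pos (pow_pos (hσpos t) 2)]
      ring
    rw [hn, hσdef t]
    have hc := (hch t).ne'
    have hid := Real.cosh_sq_sub_sinh_sq (β*t+t₀)
    field_simp
    linear_combination (-1) * hid
  · intro t
    have hn : ‖(σ t ^ 2) • α‖ ^ 2 = σ t ^ 4 * ‖α‖ ^ 2 := by
      rw [norm_smul]
      simp [abs_of_pos (pow_pos (hσpos t) 2)]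
      ring
    rw [hn, hσdef t]
    have hc := (hch t).ne'
    have hid := Real.cosh_sq_sub_sinh_sq (β*t+t₀)
    field_simp
    linear_combination (-1) * hid
end

section
/- Boundary-value solvability and value of the variance-modulated moment problem: Let d ≥ 1, m₀, m₁ ∈ ℝ^d with n := |m₁ − m₀| > 0, and σ₀, σ₁ > 0. Then there exist β > 0, t₀ ∈ ℝ and α ∈ ℝ^d with α ≠ 0 such that the curves m(t) := m₀ + (α/|α|²) β (tanh(β t + t₀) − tanh(t₀)) and σ(t) := β / (|α| cosh(β t + t₀)) satisfy m(0) = m₀, m(1) = m₁, σ(0) = σ₀, σ(1) = σ₁, and moreover β = | log( (n² + σ₀² + σ₁² − √((n² + σ₀² + σ₁²)² − 4 σ₀² σ₁²)) / (2 σ₀ σ₁) ) |; in particular the action of this curve equals ½ β² = ½ | log( (n² + σ₀² + σ₁² − √((n² + σ₀² + σ₁²)² − 4 σ₀² σ₁²)) / (2 σ₀ σ₁) ) |². -/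
open Real

set_option maxHeartbeats 1000000

/-- Boundary-value solvability and value of the variance-modulated moment problem. -/
theorem stmt2 (d : ℕ) (hd : 1 ≤ d) (m₀ m₁ : EuclideanSpace ℝ (Fin d))
    (hn : 0 < ‖m₁ - m₀‖) (σ₀ σ₁ : ℝ) (hσ₀ : 0 < σ₀) (hσ₁ : 0 < σ₁) :
    ∃ (β t₀ : ℝ) (α : EuclideanSpace ℝ (Fin d)), 0 < β ∧ α ≠ 0 ∧
      (∀ (m : ℝ → EuclideanSpace ℝ (Fin d)) (σ : ℝ → ℝ),
        (∀ t, m t = m₀ + ((β * (Real.tanh (β * t + t₀) - Real.tanh t₀)) / ‖α‖ ^ 2) • α) →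
        (∀ t, σ t = β / (‖α‖ * Real.cosh (β * t + t₀))) →
        m 0 = m₀ ∧ m 1 = m₁ ∧ σ 0 = σ₀ ∧ σ 1 = σ₁) ∧
      β = |Real.log ((‖m₁ - m₀‖ ^ 2 + σ₀ ^ 2 + σ₁ ^ 2 -
              Real.sqrt ((‖m₁ - m₀‖ ^ 2 + σ₀ ^ 2 + σ₁ ^ 2) ^ 2 - 4 * σ₀ ^ 2 * σ₁ ^ 2)) /
            (2 * σ₀ * σ₁))| ∧
      (1 / 2) * β ^ 2
        = (1 / 2) * |Real.log ((‖m₁ - m₀‖ ^ 2 + σ₀ ^ 2 + σ₁ ^ 2 -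
              Real.sqrt ((‖m₁ - m₀‖ ^ 2 + σ₀ ^ 2 + σ₁ ^ 2) ^ 2 - 4 * σ₀ ^ 2 * σ₁ ^ 2)) /
            (2 * σ₀ * σ₁))| ^ 2 := by
  set n : ℝ := ‖m₁ - m₀‖ with hn_def
  set S : ℝ := n ^ 2 + σ₀ ^ 2 + σ₁ ^ 2 with hS_def
  have hσσ : 0 < 2 * σ₀ * σ₁ := by positivity
  have hS : 2 * σ₀ * σ₁ < S := by nlinarith [sq_nonneg (σ₀ - σ₁)]
  set D : ℝ := Real.sqrt (S ^ 2 - 4 * σ₀ ^ 2 * σ₁ ^ 2) with hD_def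
  have hD2 : D ^ 2 = S ^ 2 - 4 * σ₀ ^ 2 * σ₁ ^ 2 := Real.sq_sqrt (by nlinarith)
  have hDpos : 0 < D := Real.sqrt_pos.mpr (by nlinarith)
  have hDS : D < S := by nlinarith
  set u : ℝ := (S + D) / (2 * σ₀ * σ₁) with hu_def
  have hu1 : (1 : ℝ) < u := by rw [hu_def, lt_div_iff₀ hσσ]; nlinarith
  have hu0 : (0 : ℝ) < u := by linarith
  set β : ℝ := Real.log u with hβ_def
  have hβ : 0 < β := Real.log_pos hu1
  have hexpβ : Real.exp β = u := Real.exp_log hu0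
  have hmul : u * ((S - D) / (2 * σ₀ * σ₁)) = 1 := by
    rw [hu_def]
    field_simp
    linear_combination -hD2
  have hinv : (S - D) / (2 * σ₀ * σ₁) = u⁻¹ := (inv_eq_of_mul_eq_one_right hmul).symm
  set c : ℝ := Real.cosh β with hc_def
  set s : ℝ := Real.sinh β with hs_def
  have hspos : 0 < s := Real.sinh_pos_iff.mpr hβ
  have hs2 : s ^ 2 = c ^ 2 - 1 := Real.sinh_sq β
  have h2c : 2 * σ₀ * σ₁ * c = S := by
    rw [hc_def, Real.cosh_eq, Real.exp_neg, hexpβ, ← hinv, hu_def]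
    field_simp
    ring
  have hn2 : n ^ 2 = 2 * σ₀ * σ₁ * c - σ₀ ^ 2 - σ₁ ^ 2 := by
    rw [h2c, hS_def]; ring
  set t₀ : ℝ := Real.arsinh ((σ₀ - σ₁ * c) / n) with ht₀_def
  have hsinht : Real.sinh t₀ = (σ₀ - σ₁ * c) / n := Real.sinh_arsinh _
  have hcosht : Real.cosh t₀ = σ₁ * s / n := by
    rw [ht₀_def, Real.cosh_arsinh]
    have h1 : 1 + ((σ₀ - σ₁ * c) / n) ^ 2 = (σ₁ * s / n) ^ 2 := by
      field_simp
      linear_combination hn2 - σ₁ ^ 2 * hs2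
    rw [h1, Real.sqrt_sq (by positivity)]
  have hcosh1 : Real.cosh (β + t₀) = σ₀ * s / n := by
    rw [Real.cosh_add, hcosht, hsinht, ← hc_def, ← hs_def]
    field_simp
    ring
  have hsinh1 : Real.sinh (β + t₀) = (σ₀ * c - σ₁) / n := by
    rw [Real.sinh_add, hcosht, hsinht, ← hc_def, ← hs_def]
    linear_combination (σ₁ / n) * hs2
  set k : ℝ := σ₀ * σ₁ * s / n with hk_def
  have hk : 0 < k := by positivity
  set a : ℝ := β / (k * n) with ha_def
  have ha : 0 < a := by positivity
  have hakn : a * k * n = β := by rw [ha_def]; field_simp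
  have hmne : m₁ - m₀ ≠ 0 := by
    intro h; rw [hn_def, h, norm_zero] at hn; exact lt_irrefl 0 hn
  refine ⟨β, t₀, a • (m₁ - m₀), hβ, smul_ne_zero (ne_of_gt ha) hmne, ?_, ?_, ?_⟩
  · intro m σ hm hσ
    have hnα : ‖a • (m₁ - m₀)‖ = a * n := by
      rw [norm_smul, Real.norm_eq_abs, abs_of_pos ha, hn_def]
    have hT1 : Real.tanh (β + t₀) = (σ₀ * c - σ₁) / (σ₀ * s) := by
      rw [Real.tanh_eq_sinh_div_cosh, hsinh1, hcosh1]
      field_simp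
    have hT0 : Real.tanh t₀ = (σ₀ - σ₁ * c) / (σ₁ * s) := by
      rw [Real.tanh_eq_sinh_div_cosh, hsinht, hcosht]
      field_simp
    have hTdiff : Real.tanh (β + t₀) - Real.tanh t₀ = n ^ 2 / (σ₀ * σ₁ * s) := by
      rw [hT1, hT0, hn2]
      field_simp
      ring
    refine ⟨?_, ?_, ?_, ?_⟩
    · rw [hm 0]
      have h0 : β * 0 + t₀ = t₀ := by ring
      rw [h0, sub_self, mul_zero, zero_div, zero_smul, add_zero]
    · rw [hm 1]
      have h1 : β * 1 + t₀ = β + t₀ := by ring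
      rw [h1, hTdiff, hnα, smul_smul]
      have hcoef : β * (n ^ 2 / (σ₀ * σ₁ * s)) / (a * n) ^ 2 * a = 1 := by
        have hkn : σ₀ * σ₁ * s = k * n := by rw [hk_def]; field_simp
        rw [hkn, ← hakn]
        field_simp
      rw [hcoef, one_smul]
      abel
    · rw [hσ 0]
      have h0 : β * 0 + t₀ = t₀ := by ring
      rw [h0, hnα, hcosht, ← hakn, hk_def]
      field_simp
    · rw [hσ 1]
      have h1 : β * 1 + t₀ = β + t₀ := by ring
      rw [h1, hnα, hcosh1, ← hakn, hk_def]
      field_simp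
  · rw [hinv, Real.log_inv, abs_neg, ← hβ_def, abs_of_pos hβ]
  · rw [hinv, Real.log_inv, abs_neg, ← hβ_def, abs_of_pos hβ]
end

section
/- Small-mean-gap asymptotics of the moment distance: Fix σ₀, σ₁ > 0 with σ₀ ≠ σ₁ and define F(n) := ½ | log( (n² + σ₀² + σ₁² − √((n² + σ₀² + σ₁²)² − 4 σ₀² σ₁²)) / (2 σ₀ σ₁) ) |² for n ≥ 0. Then, as n → 0⁺, F(n) − ½ (log σ₀ − log σ₁)² − ( (log σ₀² − log σ₁²)/(σ₀² − σ₁²) ) · n²/2 = O(n⁴). -/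
open Real Asymptotics Set

private noncomputable def gfun (a b : ℝ) : ℝ → ℝ := fun t =>
  (1/2) * (Real.log ((t + a^2 + b^2 -
    Real.sqrt ((t + a^2 + b^2)^2 - 4*a^2*b^2)) / (2*a*b)))^2

private lemma gfun_contDiff {a b : ℝ} (hb : 0 < b) (hlt : b < a) :
    ContDiffOn ℝ 2 (gfun a b) (Icc 0 1) := by
  have ha : 0 < a := hb.trans hlt
  have hd : 0 < a^2 - b^2 := by nlinarith
  intro x hx
  have hxs : 0 < x + a^2 + b^2 := by nlinarith [hx.1]
  have hv : 0 < (x + a^2 + b^2)^2 - 4*a^2*b^2 := by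
    nlinarith [hx.1, sq_nonneg x, mul_pos hd hd, mul_nonneg hx.1 (by positivity : (0:ℝ) ≤ a^2 + b^2)]
  have hsqlt : Real.sqrt ((x + a^2 + b^2)^2 - 4*a^2*b^2) < x + a^2 + b^2 := by
    rw [Real.sqrt_lt' hxs]
    nlinarith [mul_pos ha hb]
  have hq : 0 < (x + a^2 + b^2 - Real.sqrt ((x + a^2 + b^2)^2 - 4*a^2*b^2)) / (2*a*b) :=
    div_pos (by linarith) (by positivity)
  apply ContDiffAt.contDiffWithinAt
  have hpoly : ContDiffAt ℝ 2 (fun t : ℝ => (t + a^2 + b^2)^2 - 4*a^2*b^2) x := by fun_prop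
  have hsqrt : ContDiffAt ℝ 2 (fun t : ℝ => Real.sqrt ((t + a^2 + b^2)^2 - 4*a^2*b^2)) x :=
    (Real.contDiffAt_sqrt hv.ne').comp x hpoly
  have hinner : ContDiffAt ℝ 2 (fun t : ℝ => (t + a^2 + b^2 -
      Real.sqrt ((t + a^2 + b^2)^2 - 4*a^2*b^2)) / (2*a*b)) x :=
    (((contDiffAt_id.add contDiffAt_const).add contDiffAt_const).sub hsqrt).div_const _
  have hlog : ContDiffAt ℝ 2 (fun t : ℝ => Real.log ((t + a^2 + b^2 -
      Real.sqrt ((t + a^2 + b^2)^2 - 4*a^2*b^2)) / (2*a*b))) x :=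
    hinner.log hq.ne'
  exact contDiffAt_const.mul (hlog.pow 2)

private lemma gfun_q0 {a b : ℝ} (hb : 0 < b) (hlt : b < a) :
    ((0:ℝ) + a^2 + b^2 - Real.sqrt (((0:ℝ) + a^2 + b^2)^2 - 4*a^2*b^2)) / (2*a*b) = b/a := by
  have ha : 0 < a := hb.trans hlt
  have hd : 0 < a^2 - b^2 := by nlinarith
  rw [show ((0:ℝ) + a^2 + b^2)^2 - 4*a^2*b^2 = (a^2-b^2)^2 by ring, Real.sqrt_sq hd.le]
  field_simp
  ring

private lemma gfun_zero {a b : ℝ} (hb : 0 < b) (hlt : b < a) :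
    gfun a b 0 = (1/2) * (Real.log a - Real.log b)^2 := by
  have ha : 0 < a := hb.trans hlt
  unfold gfun
  rw [gfun_q0 hb hlt, Real.log_div hb.ne' ha.ne']
  ring

private lemma gfun_hasDerivAt {a b : ℝ} (hb : 0 < b) (hlt : b < a) :
    HasDerivAt (gfun a b) ((Real.log a - Real.log b)/(a^2-b^2)) 0 := by
  have ha : 0 < a := hb.trans hlt
  have hd : 0 < a^2 - b^2 := by nlinarith
  have e1 : ((0:ℝ) + a^2 + b^2)^2 - 4*a^2*b^2 = (a^2-b^2)^2 := by ring
  have h1 : HasDerivAt (fun t : ℝ => t + a^2 + b^2) 1 0 := by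
    simpa using ((hasDerivAt_id (0:ℝ)).add_const (a^2)).add_const (b^2)
  have h2 : HasDerivAt (fun t : ℝ => (t + a^2 + b^2)^2 - 4*a^2*b^2) (2*(a^2+b^2)) 0 := by
    have h := (h1.pow 2).sub_const (4*a^2*b^2)
    refine h.congr_deriv ?_
    norm_num
  have hvne : ((0:ℝ) + a^2 + b^2)^2 - 4*a^2*b^2 ≠ 0 := by
    rw [e1]; positivity
  have h3 : HasDerivAt (fun t : ℝ => Real.sqrt ((t + a^2 + b^2)^2 - 4*a^2*b^2))
      ((a^2+b^2)/(a^2-b^2)) 0 := by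
    have h := (Real.hasDerivAt_sqrt hvne).comp 0 h2
    refine h.congr_deriv ?_
    rw [e1, Real.sqrt_sq hd.le]
    field_simp
  have h4 : HasDerivAt (fun t : ℝ => (t + a^2 + b^2 -
      Real.sqrt ((t + a^2 + b^2)^2 - 4*a^2*b^2)) / (2*a*b))
      ((1 - (a^2+b^2)/(a^2-b^2))/(2*a*b)) 0 := (h1.sub h3).div_const _
  have hqne : ((0:ℝ) + a^2 + b^2 - Real.sqrt (((0:ℝ) + a^2 + b^2)^2 - 4*a^2*b^2)) / (2*a*b) ≠ 0 := by
    rw [gfun_q0 hb hlt]; positivity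
  have h5 := (Real.hasDerivAt_log hqne).comp 0 h4
  have h6 := HasDerivAt.const_mul (1/2 : ℝ) (h5.pow 2)
  refine h6.congr_deriv ?_
  simp only [Function.comp_apply]
  rw [gfun_q0 hb hlt, Real.log_div hb.ne' ha.ne']
  norm_num
  field_simp
  ring

private lemma key (a b : ℝ) (hb : 0 < b) (hlt : b < a) :
    (fun n : ℝ =>
        (1 / 2) * |Real.log ((n ^ 2 + a ^ 2 + b ^ 2 -
            Real.sqrt ((n ^ 2 + a ^ 2 + b ^ 2) ^ 2 - 4 * a ^ 2 * b ^ 2)) /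
          (2 * a * b))| ^ 2
        - (1 / 2) * (Real.log a - Real.log b) ^ 2
        - ((Real.log (a ^ 2) - Real.log (b ^ 2)) / (a ^ 2 - b ^ 2)) * n ^ 2 / 2)
      =O[nhdsWithin 0 (Set.Ioi 0)] (fun n : ℝ => n ^ 4) := by
  have ha : 0 < a := hb.trans hlt
  have h0mem : (0:ℝ) ∈ Icc (0:ℝ) 1 := ⟨le_refl _, zero_le_one⟩
  have hud := uniqueDiffOn_Icc (zero_lt_one) 0 h0mem
  obtain ⟨C, hC⟩ := exists_taylor_mean_remainder_bound (f := gfun a b) (n := 1)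
    zero_le_one (by exact_mod_cast gfun_contDiff hb hlt)
  have htay : ∀ x : ℝ, taylorWithinEval (gfun a b) 1 (Icc 0 1) 0 x
      = gfun a b 0 + ((Real.log a - Real.log b)/(a^2-b^2)) * x := by
    intro x
    rw [taylorWithinEval_succ, taylor_within_zero_eval,
      iteratedDerivWithin_one,
      (gfun_hasDerivAt hb hlt).hasDerivWithinAt.derivWithin hud]
    simp
    ring
  rw [isBigO_iff]
  refine ⟨C, ?_⟩
  filter_upwards [Ioo_mem_nhdsGT_of_mem (Set.left_mem_Ico.mpr zero_lt_one)] with n hn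
  have hn2 : n^2 ∈ Icc (0:ℝ) 1 := ⟨sq_nonneg n, by nlinarith [hn.1, hn.2]⟩
  have hbnd := hC (n^2) hn2
  rw [htay] at hbnd
  have heq : (1 / 2) * |Real.log ((n ^ 2 + a ^ 2 + b ^ 2 -
            Real.sqrt ((n ^ 2 + a ^ 2 + b ^ 2) ^ 2 - 4 * a ^ 2 * b ^ 2)) /
          (2 * a * b))| ^ 2
        - (1 / 2) * (Real.log a - Real.log b) ^ 2
        - ((Real.log (a ^ 2) - Real.log (b ^ 2)) / (a ^ 2 - b ^ 2)) * n ^ 2 / 2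
      = gfun a b (n^2) - (gfun a b 0 + ((Real.log a - Real.log b)/(a^2-b^2)) * n^2) := by
    rw [sq_abs, gfun_zero hb hlt, Real.log_pow, Real.log_pow]
    unfold gfun
    push_cast
    ring
  rw [heq]
  calc ‖gfun a b (n^2) - (gfun a b 0 + ((Real.log a - Real.log b)/(a^2-b^2)) * n^2)‖
      ≤ C * (n^2 - 0)^(1+1) := hbnd
    _ = C * ‖n^4‖ := by
        rw [Real.norm_eq_abs, abs_of_nonneg (by positivity : (0:ℝ) ≤ n^4)]
        ring

/-- Small-mean-gap asymptotics of the variance-modulated moment distance. -/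
theorem stmt4 (σ₀ σ₁ : ℝ) (h₀ : 0 < σ₀) (h₁ : 0 < σ₁) (hne : σ₀ ≠ σ₁) :
    (fun n : ℝ =>
        (1 / 2) * |Real.log ((n ^ 2 + σ₀ ^ 2 + σ₁ ^ 2 -
            Real.sqrt ((n ^ 2 + σ₀ ^ 2 + σ₁ ^ 2) ^ 2 - 4 * σ₀ ^ 2 * σ₁ ^ 2)) /
          (2 * σ₀ * σ₁))| ^ 2
        - (1 / 2) * (Real.log σ₀ - Real.log σ₁) ^ 2
        - ((Real.log (σ₀ ^ 2) - Real.log (σ₁ ^ 2)) / (σ₀ ^ 2 - σ₁ ^ 2)) * n ^ 2 / 2)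
      =O[nhdsWithin 0 (Set.Ioi 0)] (fun n : ℝ => n ^ 4) := by
  rcases hne.lt_or_gt with h | h
  · -- σ₀ < σ₁ : use key σ₁ σ₀ and symmetry
    have hk := key σ₁ σ₀ h₀ h
    have heq : (fun n : ℝ =>
        (1 / 2) * |Real.log ((n ^ 2 + σ₀ ^ 2 + σ₁ ^ 2 -
            Real.sqrt ((n ^ 2 + σ₀ ^ 2 + σ₁ ^ 2) ^ 2 - 4 * σ₀ ^ 2 * σ₁ ^ 2)) /
          (2 * σ₀ * σ₁))| ^ 2
        - (1 / 2) * (Real.log σ₀ - Real.log σ₁) ^ 2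
        - ((Real.log (σ₀ ^ 2) - Real.log (σ₁ ^ 2)) / (σ₀ ^ 2 - σ₁ ^ 2)) * n ^ 2 / 2)
      = (fun n : ℝ =>
        (1 / 2) * |Real.log ((n ^ 2 + σ₁ ^ 2 + σ₀ ^ 2 -
            Real.sqrt ((n ^ 2 + σ₁ ^ 2 + σ₀ ^ 2) ^ 2 - 4 * σ₁ ^ 2 * σ₀ ^ 2)) /
          (2 * σ₁ * σ₀))| ^ 2
        - (1 / 2) * (Real.log σ₁ - Real.log σ₀) ^ 2
        - ((Real.log (σ₁ ^ 2) - Real.log (σ₀ ^ 2)) / (σ₁ ^ 2 - σ₀ ^ 2)) * n ^ 2 / 2) := by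
      funext n
      rw [show n ^ 2 + σ₀ ^ 2 + σ₁ ^ 2 = n ^ 2 + σ₁ ^ 2 + σ₀ ^ 2 by ring,
        show (4 * σ₀ ^ 2 * σ₁ ^ 2 : ℝ) = 4 * σ₁ ^ 2 * σ₀ ^ 2 by ring,
        show (2 * σ₀ * σ₁ : ℝ) = 2 * σ₁ * σ₀ by ring,
        show ((Real.log (σ₀ ^ 2) - Real.log (σ₁ ^ 2)) / (σ₀ ^ 2 - σ₁ ^ 2) : ℝ)
          = (Real.log (σ₁ ^ 2) - Real.log (σ₀ ^ 2)) / (σ₁ ^ 2 - σ₀ ^ 2) by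
            rw [← neg_div_neg_eq]; ring_nf]
      ring
    rw [heq]
    exact hk
  · exact key σ₀ σ₁ h₁ h
end

section
/- Exponential decay of the normalized mean along the moment flow: Let d ≥ 1, x₀ ∈ ℝ^d and B a symmetric positive definite d×d real matrix. Suppose m : [0,∞) → ℝ^d and C, A : [0,∞) → d×d real matrices are differentiable with m'(t) = −C(t) B⁻¹ (m(t) − x₀), C'(t) = 2 C(t) − 2 C(t) B⁻¹ C(t), A'(t) = ½ C'(t) (A(t)ᵀ)⁻¹, that A(t) is invertible and A(t) A(t)ᵀ = C(t) for every t ≥ 0. Then for every t ≥ 0: A(t)⁻¹ (m(t) − x₀) = e^{−t} · A(0)⁻¹ (m(0) − x₀). -/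
open Matrix

attribute [local instance] Matrix.normedAddCommGroup Matrix.normedSpace

open Set

noncomputable def mulVecCLM (d : ℕ) :
    Matrix (Fin d) (Fin d) ℝ →L[ℝ] (Fin d → ℝ) →L[ℝ] (Fin d → ℝ) :=
  LinearMap.toContinuousLinearMap
    { toFun := fun M => LinearMap.toContinuousLinearMap (Matrix.mulVecLin M)
      map_add' := by intro M N; ext v i; simp [Matrix.add_mulVec]
      map_smul' := by intro c M; ext v i; simp [Matrix.smul_mulVec] }

@[simp] theorem mulVecCLM_apply (d : ℕ) (M : Matrix (Fin d) (Fin d) ℝ) (v : Fin d → ℝ) :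
    mulVecCLM d M v = M *ᵥ v := by
  simp [mulVecCLM]

theorem hasDerivAt_mulVec {d : ℕ} {M : ℝ → Matrix (Fin d) (Fin d) ℝ}
    {v : ℝ → Fin d → ℝ} {M' : Matrix (Fin d) (Fin d) ℝ} {v' : Fin d → ℝ} {t : ℝ}
    (hM : HasDerivAt M M' t) (hv : HasDerivAt v v' t) :
    HasDerivAt (fun s => M s *ᵥ v s) (M' *ᵥ v t + M t *ᵥ v') t := by
  have h1 : HasDerivAt (fun s => mulVecCLM d (M s)) (mulVecCLM d M') t :=
    (mulVecCLM d).hasFDerivAt.comp_hasDerivAt t hM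
  simpa using h1.clm_apply hv

/-- Exponential decay of the normalized mean along the moment flow of the
covariance-modulated Fokker-Planck equation with Gaussian target `N(x₀, B)`. -/
theorem stmt5 (d : ℕ) (hd : 1 ≤ d) (x₀ : Fin d → ℝ)
    (B : Matrix (Fin d) (Fin d) ℝ) (hB : B.PosDef)
    (m : ℝ → (Fin d → ℝ)) (C A : ℝ → Matrix (Fin d) (Fin d) ℝ)
    (hm : ∀ t, 0 ≤ t → HasDerivAt m (-((C t * B⁻¹) *ᵥ (m t - x₀))) t)
    (hC : ∀ t, 0 ≤ t → HasDerivAt C (2 * C t - 2 * (C t * B⁻¹ * C t)) t)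
    (hA : ∀ t, 0 ≤ t →
      HasDerivAt A ((1 / 2 : ℝ) • ((2 * C t - 2 * (C t * B⁻¹ * C t)) * ((A t)ᵀ)⁻¹)) t)
    (hAunit : ∀ t, 0 ≤ t → IsUnit (A t))
    (hAAt : ∀ t, 0 ≤ t → A t * (A t)ᵀ = C t) :
    ∀ t, 0 ≤ t →
      (A t)⁻¹ *ᵥ (m t - x₀) = Real.exp (-t) • ((A 0)⁻¹ *ᵥ (m 0 - x₀)) := by
  have hdet : ∀ s, 0 ≤ s → IsUnit (A s).det := fun s hs =>
    (Matrix.isUnit_iff_isUnit_det _).mp (hAunit s hs)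
  -- derivative of A in nicer form
  have hA' : ∀ s, 0 ≤ s → HasDerivAt A (A s - C s * B⁻¹ * A s) s := by
    intro s hs
    have hTinv : (A s)ᵀ * ((A s)ᵀ)⁻¹ = 1 :=
      Matrix.mul_nonsing_inv _ (by rw [Matrix.det_transpose]; exact hdet s hs)
    have hCT : C s * ((A s)ᵀ)⁻¹ = A s := by
      rw [← hAAt s hs, mul_assoc, hTinv, mul_one]
    have key : (1 / 2 : ℝ) • ((2 * C s - 2 * (C s * B⁻¹ * C s)) * ((A s)ᵀ)⁻¹)
        = A s - C s * B⁻¹ * A s := by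
      have h2 : ∀ X : Matrix (Fin d) (Fin d) ℝ, (1 / 2 : ℝ) • (2 * X) = X := fun X => by
        rw [two_mul]; module
      rw [← smul_mul_assoc, smul_sub, h2, h2, sub_mul, hCT, mul_assoc (C s * B⁻¹), hCT]
    rw [← key]; exact hA s hs
  set v₀ : Fin d → ℝ := (A 0)⁻¹ *ᵥ (m 0 - x₀) with hv₀
  set g : ℝ → Fin d → ℝ := fun s => A s *ᵥ (Real.exp (-s) • v₀) with hg
  have hg' : ∀ s, 0 ≤ s → HasDerivAt g (-((C s * B⁻¹) *ᵥ g s)) s := by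
    intro s hs
    have he : HasDerivAt (fun u : ℝ => Real.exp (-u) • v₀) ((-Real.exp (-s)) • v₀) s := by
      have h1 : HasDerivAt (fun u : ℝ => Real.exp (-u)) (-Real.exp (-s)) s := by
        simpa [Function.comp_def] using (Real.hasDerivAt_exp (-s)).comp s (hasDerivAt_neg s)
      exact h1.smul_const v₀
    have h := hasDerivAt_mulVec (hA' s hs) he
    have heq : (A s - C s * B⁻¹ * A s) *ᵥ (Real.exp (-s) • v₀)
          + A s *ᵥ ((-Real.exp (-s)) • v₀) = -((C s * B⁻¹) *ᵥ g s) := by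
      simp only [hg, Matrix.sub_mulVec, neg_smul, Matrix.mulVec_neg, ← Matrix.mulVec_mulVec]
      abel
    rw [← heq]; exact h
  intro t ht
  -- ODE uniqueness on [0, t]
  set cl : ℝ → ℝ := fun s => max 0 (min s t) with hcl
  have hclmem : ∀ s, cl s ∈ Icc 0 t := fun s =>
    ⟨le_max_left _ _, max_le ht (min_le_right _ _)⟩
  have hcleq : ∀ s ∈ Ico (0:ℝ) t, cl s = s := by
    intro s hs
    simp [hcl, min_eq_left hs.2.le, max_eq_right hs.1]
  set V : ℝ → (Fin d → ℝ) → (Fin d → ℝ) := fun s x => -((C (cl s) * B⁻¹) *ᵥ x) with hV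
  have hCcont : ContinuousOn C (Icc 0 t) := fun s hs =>
    (hC s hs.1).continuousAt.continuousWithinAt
  have hφcont : ContinuousOn (fun s => ‖mulVecCLM d (C s * B⁻¹)‖) (Icc 0 t) :=
    (continuous_norm.comp ((mulVecCLM d).continuous.comp
      (continuous_id.matrix_mul continuous_const))).comp_continuousOn hCcont
  obtain ⟨K0, hK0⟩ := isCompact_Icc.exists_bound_of_continuousOn hφcont
  have hLip : ∀ s, LipschitzOnWith K0.toNNReal (V s) univ := by
    intro s
    have hb : ‖mulVecCLM d (C (cl s) * B⁻¹)‖ ≤ K0 :=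
      le_trans (le_abs_self _) (hK0 _ (hclmem s))
    have hVs : V s = ⇑(-(mulVecCLM d (C (cl s) * B⁻¹))) := by
      funext x; simp [hV]
    rw [hVs]
    refine ((-(mulVecCLM d (C (cl s) * B⁻¹))).lipschitz.weaken ?_).lipschitzOnWith
    rw [nnnorm_neg, ← NNReal.coe_le_coe, coe_nnnorm, Real.coe_toNNReal']
    exact hb.trans (le_max_left _ _)
  have hfc : ContinuousOn (fun s => m s - x₀) (Icc 0 t) := fun s hs =>
    ((hm s hs.1).sub_const x₀).continuousAt.continuousWithinAt
  have hgc : ContinuousOn g (Icc 0 t) := fun s hs =>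
    (hg' s hs.1).continuousAt.continuousWithinAt
  have hfd : ∀ s ∈ Ico (0:ℝ) t,
      HasDerivWithinAt (fun s => m s - x₀) (V s (m s - x₀)) (Ici s) s := by
    intro s hs
    have : V s (m s - x₀) = -((C s * B⁻¹) *ᵥ (m s - x₀)) := by rw [hV]; simp [hcleq s hs]
    rw [this]
    exact ((hm s hs.1).sub_const x₀).hasDerivWithinAt
  have hgd : ∀ s ∈ Ico (0:ℝ) t, HasDerivWithinAt g (V s (g s)) (Ici s) s := by
    intro s hs
    have : V s (g s) = -((C s * B⁻¹) *ᵥ g s) := by rw [hV]; simp [hcleq s hs]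
    rw [this]
    exact (hg' s hs.1).hasDerivWithinAt
  have h0 : m 0 - x₀ = g 0 := by
    simp only [hg, neg_zero, Real.exp_zero, one_smul, hv₀, Matrix.mulVec_mulVec]
    rw [Matrix.mul_nonsing_inv _ (hdet 0 le_rfl), Matrix.one_mulVec]
  have heq : EqOn (fun s => m s - x₀) g (Icc 0 t) :=
    ODE_solution_unique_of_mem_Icc_right (fun s _ => hLip s) hfc hfd (fun _ _ => Set.mem_univ _)
      hgc hgd (fun _ _ => Set.mem_univ _) h0
  have hmt : m t - x₀ = A t *ᵥ (Real.exp (-t) • v₀) := heq ⟨ht, le_rfl⟩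
  rw [hmt, Matrix.mulVec_mulVec, Matrix.nonsing_inv_mul _ (hdet t ht), Matrix.one_mulVec]
end

section
/- Explicit solution of the covariance Riccati flow: Let d ≥ 1 and B a symmetric positive definite d×d real matrix. Suppose C : [0,∞) → d×d real matrices is differentiable with C'(t) = 2 C(t) − 2 C(t) B⁻¹ C(t) and C(t) invertible for every t ≥ 0. Then for every t ≥ 0: C(t)⁻¹ = (1 − e^{−2t}) B⁻¹ + e^{−2t} C(0)⁻¹. -/
open Matrix

attribute [local instance] Matrix.normedAddCommGroup Matrix.normedSpace

private lemma matMul_hasDerivWithinAt {d : ℕ} {A B : ℝ → Matrix (Fin d) (Fin d) ℝ}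
    {A' B' : Matrix (Fin d) (Fin d) ℝ} {S : Set ℝ} {t : ℝ}
    (hA : HasDerivWithinAt A A' S t) (hB : HasDerivWithinAt B B' S t) :
    HasDerivWithinAt (fun s => A s * B s) (A' * B t + A t * B') S t := by
  refine hasDerivWithinAt_pi.2 fun i => ?_
  rw [hasDerivWithinAt_pi]
  intro j
  have hfun : (fun s => (A s * B s) i j) = fun s => ∑ k, A s i k * B s k j := by
    funext s; simp [Matrix.mul_apply]
  have hder : (A' * B t + A t * B') i j = ∑ k, (A' i k * B t k j + A t i k * B' k j) := by
    simp [Matrix.mul_apply, Matrix.add_apply, Finset.sum_add_distrib]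
  rw [hfun, hder]
  exact HasDerivWithinAt.fun_sum fun k _ =>
    (hasDerivWithinAt_pi.1 (hasDerivWithinAt_pi.1 hA i) k).mul
      (hasDerivWithinAt_pi.1 (hasDerivWithinAt_pi.1 hB k) j)

private lemma det_differentiableWithinAt {d : ℕ} {M : ℝ → Matrix (Fin d) (Fin d) ℝ}
    {S : Set ℝ} {t : ℝ}
    (h : ∀ i j, DifferentiableWithinAt ℝ (fun s => M s i j) S t) :
    DifferentiableWithinAt ℝ (fun s => (M s).det) S t := by
  have : (fun s => (M s).det)
      = fun s => ∑ σ : Equiv.Perm (Fin d), (Equiv.Perm.sign σ : ℤ) * ∏ i, M s (σ i) i := by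
    funext s; rw [Matrix.det_apply']
  rw [this]
  exact DifferentiableWithinAt.fun_sum fun (σ : Equiv.Perm (Fin d)) _ =>
    (DifferentiableWithinAt.fun_finsetProd fun i _ => h (σ i) i).const_mul _

private lemma inv_differentiableWithinAt {d : ℕ} {C : ℝ → Matrix (Fin d) (Fin d) ℝ}
    {S : Set ℝ} {t : ℝ}
    (h : ∀ i j, DifferentiableWithinAt ℝ (fun s => C s i j) S t)
    (hunit : IsUnit (C t)) :
    DifferentiableWithinAt ℝ (fun s => (C s)⁻¹) S t := by
  have hdet : DifferentiableWithinAt ℝ (fun s => (C s).det) S t := det_differentiableWithinAt h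
  have hd0 : (C t).det ≠ 0 := ((Matrix.isUnit_iff_isUnit_det _).1 hunit).ne_zero
  have hrw : (fun s => (C s)⁻¹) = fun s => ((C s).det)⁻¹ • (C s).adjugate := by
    funext s; rw [Matrix.inv_def, Ring.inverse_eq_inv']
  rw [hrw]
  refine (hdet.inv hd0).smul ?_
  refine differentiableWithinAt_pi.2 fun i => differentiableWithinAt_pi.2 fun j => ?_
  have : (fun s => (C s).adjugate i j)
      = fun s => ((C s).updateRow j (Pi.single i 1)).det := by
    funext s; rw [Matrix.adjugate_apply]
  rw [this]
  apply det_differentiableWithinAt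
  intro a b
  rcases eq_or_ne a j with rfl | hne
  · have : (fun s => (C s).updateRow a (Pi.single i 1) a b) = fun _ : ℝ => (Pi.single (M := fun _ : Fin d => ℝ) i 1 b) := by
      funext s; rw [Matrix.updateRow_self]
    rw [this]; exact differentiableWithinAt_const _
  · have : (fun s => (C s).updateRow j (Pi.single i 1) a b) = fun s => C s a b := by
      funext s; rw [Matrix.updateRow_ne hne]
    rw [this]; exact h a b

/-- Explicit solution of the covariance Riccati flow
`C'(t) = 2 C(t) - 2 C(t) B⁻¹ C(t)`. -/
theorem stmt6 (d : ℕ) (hd : 1 ≤ d)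
    (B : Matrix (Fin d) (Fin d) ℝ) (hB : B.PosDef)
    (C : ℝ → Matrix (Fin d) (Fin d) ℝ)
    (hC : ∀ t, 0 ≤ t → HasDerivAt C (2 * C t - 2 * (C t * B⁻¹ * C t)) t)
    (hCunit : ∀ t, 0 ≤ t → IsUnit (C t)) :
    ∀ t, 0 ≤ t →
      (C t)⁻¹ = (1 - Real.exp (-2 * t)) • B⁻¹ + Real.exp (-2 * t) • (C 0)⁻¹ := by
  set S : Set ℝ := Set.Ici (0 : ℝ) with hS
  set g : ℝ → Matrix (Fin d) (Fin d) ℝ := fun s => (C s)⁻¹ with hgdef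
  -- entrywise differentiability of C within S
  have hCentry : ∀ t ∈ S, ∀ i j, DifferentiableWithinAt ℝ (fun s => C s i j) S t := by
    intro t ht i j
    exact ((hasDerivAt_pi.1 (hasDerivAt_pi.1 (hC t ht) i) j)).differentiableAt.differentiableWithinAt
  have hgdiff : ∀ t ∈ S, DifferentiableWithinAt ℝ g S t := fun t ht =>
    inv_differentiableWithinAt (hCentry t ht) (hCunit t ht)
  have hU : ∀ t ∈ S, UniqueDiffWithinAt ℝ S t := uniqueDiffOn_Ici 0
  have hCg : ∀ t ∈ S, C t * g t = 1 := fun t ht =>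
    Matrix.mul_nonsing_inv _ ((Matrix.isUnit_iff_isUnit_det _).1 (hCunit t ht))
  have hgC : ∀ t ∈ S, g t * C t = 1 := fun t ht =>
    Matrix.nonsing_inv_mul _ ((Matrix.isUnit_iff_isUnit_det _).1 (hCunit t ht))
  -- derivative of g within S
  have hgd : ∀ t ∈ S, HasDerivWithinAt g (2 * B⁻¹ - 2 * g t) S t := by
    intro t ht
    have hGd : HasDerivWithinAt g (derivWithin g S t) S t := (hgdiff t ht).hasDerivWithinAt
    set G := derivWithin g S t with hGdef
    have hprod : HasDerivWithinAt (fun s => C s * g s)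
        ((2 * C t - 2 * (C t * B⁻¹ * C t)) * g t + C t * G) S t :=
      matMul_hasDerivWithinAt (hC t ht).hasDerivWithinAt hGd
    have hone : (fun s : ℝ => (1 : Matrix (Fin d) (Fin d) ℝ)) =ᶠ[nhdsWithin t S]
        fun s => C s * g s := by
      filter_upwards [self_mem_nhdsWithin] with s hs
      exact (hCg s hs).symm
    have hzero : HasDerivWithinAt (fun s => C s * g s) 0 S t :=
      (hasDerivWithinAt_const t S (1 : Matrix (Fin d) (Fin d) ℝ)).congr_of_eventuallyEq
        hone.symm (hCg t ht)
    have huniq : (2 * C t - 2 * (C t * B⁻¹ * C t)) * g t + C t * G = 0 := by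
      rw [← hprod.derivWithin (hU t ht), hzero.derivWithin (hU t ht)]
    have hCG : C t * G = -((2 * C t - 2 * (C t * B⁻¹ * C t)) * g t) :=
      eq_neg_of_add_eq_zero_right huniq
    have hGval : G = 2 * B⁻¹ - 2 * g t := by
      have h1 : G = g t * (C t * G) := by rw [← mul_assoc, hgC t ht, one_mul]
      rw [hCG] at h1
      rw [h1]
      have e1 := hCg t ht
      have e2 := hgC t ht
      calc g t * -((2 * C t - 2 * (C t * B⁻¹ * C t)) * g t)
          = -(2 * (g t * (C t * g t)) - 2 * ((g t * C t) * B⁻¹ * (C t * g t))) := by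
            noncomm_ring
        _ = 2 * B⁻¹ - 2 * g t := by rw [e1, e2]; noncomm_ring
    rw [← hGval]; exact hGd
  -- the function F is constant on S
  set F : ℝ → Matrix (Fin d) (Fin d) ℝ := fun s => Real.exp (2 * s) • (g s - B⁻¹) with hF
  have hFd : ∀ t ∈ S, HasDerivWithinAt F 0 S t := by
    intro t ht
    have hexp : HasDerivAt (fun s : ℝ => Real.exp (2 * s)) (Real.exp (2 * t) * 2) t := by
      simpa using ((hasDerivAt_id t).const_mul 2).exp
    have hsub : HasDerivWithinAt (fun s => g s - B⁻¹) (2 * B⁻¹ - 2 * g t) S t :=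
      (hgd t ht).sub_const _
    have := hexp.hasDerivWithinAt.smul hsub
    refine this.congr_deriv ?_
    have h2 : ∀ M : Matrix (Fin d) (Fin d) ℝ, (2 : Matrix (Fin d) (Fin d) ℝ) * M = (2 : ℝ) • M :=
      fun M => by rw [two_mul, two_smul]
    rw [h2, h2]
    module
  intro t ht
  have hconst : F t = F 0 := by
    have hcont : ContinuousOn F (Set.Icc 0 t) := fun x hx =>
      ((hFd x hx.1).continuousWithinAt).mono (fun y hy => hy.1)
    have hderiv : ∀ x ∈ Set.Ico (0 : ℝ) t, HasDerivWithinAt F 0 (Set.Ici x) x := fun x hx =>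
      (hFd x hx.1).mono (Set.Ici_subset_Ici.2 hx.1)
    exact constant_of_has_deriv_right_zero hcont hderiv t ⟨ht, le_refl t⟩
  have hF0 : F 0 = g 0 - B⁻¹ := by simp [hF]
  -- solve for g t
  have key : g t - B⁻¹ = Real.exp (-2 * t) • (g 0 - B⁻¹) := by
    have h := hconst.trans hF0
    have h2 : Real.exp (-2 * t) • F t = Real.exp (-2 * t) • (g 0 - B⁻¹) := by rw [h]
    rw [show F t = Real.exp (2 * t) • (g t - B⁻¹) from rfl, smul_smul, ← Real.exp_add,
      show -2 * t + 2 * t = 0 by ring, Real.exp_zero, one_smul] at h2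
    exact h2
  have : g t = B⁻¹ + Real.exp (-2 * t) • (g 0 - B⁻¹) := by
    rw [← key]; abel
  rw [show (C t)⁻¹ = g t from rfl, show (C 0)⁻¹ = g 0 from rfl, this]
  rw [smul_sub, sub_smul, one_smul]
  abel
end

section
/- Explicit rotation-constrained moment geodesics with fixed mean: Let d ≥ 1, A₀ an invertible d×d real matrix, B any d×d real matrix, and set Z := (B + Bᵀ)/2 and Q := (B − Bᵀ)/2. Define A(t) := A₀ · exp(t B) · exp(−t Q) for t ∈ ℝ. Then for every t: (i) A(t) is invertible and A is differentiable; (ii) A(t)⁻¹ A'(t) = exp(t Q) · Z · exp(−t Q), and this matrix is symmetric (so the curve A is horizontal); (iii) ‖A(t)⁻¹ A'(t)‖_HS = ‖Z‖_HS, i.e. the action density is constant; (iv) the geodesic equation d/dt ( A(t)⁻¹ A'(t) ) = Q (A(t)⁻¹ A'(t)) − (A(t)⁻¹ A'(t)) Q holds (the Euler–Lagrange equation of the rotation-constrained moment problem with zero mean velocity, with skew-symmetric multiplier −Q). -/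
open Matrix

section LinftyAux

open NormedSpace

attribute [local instance] Matrix.linftyOpNormedRing Matrix.linftyOpNormedAlgebra

variable {d : ℕ}

lemma aux_derivA (A₀ B Q : Matrix (Fin d) (Fin d) ℝ) (t : ℝ) :
    HasDerivAt (fun s : ℝ => A₀ * exp (s • B) * exp (-(s • Q)))
      (A₀ * exp (t • B) * B * exp (-(t • Q))
        - A₀ * exp (t • B) * exp (-(t • Q)) * Q) t := by
  have h1 : HasDerivAt (fun s : ℝ => exp (s • B)) (exp (t • B) * B) t :=
    hasDerivAt_exp_smul_const B t
  have h2 : HasDerivAt (fun s : ℝ => exp (-(s • Q))) (exp (-(t • Q)) * (-Q)) t := by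
    have := hasDerivAt_exp_smul_const (𝕂 := ℝ) (-Q) t
    simp only [smul_neg] at this
    exact this
  have h := (h1.const_mul A₀).mul h2
  exact h.congr_deriv (by noncomm_ring)

lemma aux_derivM (Z Q : Matrix (Fin d) (Fin d) ℝ) (t : ℝ) :
    HasDerivAt (fun s : ℝ => exp (s • Q) * Z * exp (-(s • Q)))
      (Q * (exp (t • Q) * Z * exp (-(t • Q)))
        - (exp (t • Q) * Z * exp (-(t • Q))) * Q) t := by
  have h1 : HasDerivAt (fun s : ℝ => exp (s • Q)) (Q * exp (t • Q)) t :=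
    hasDerivAt_exp_smul_const' Q t
  have h2 : HasDerivAt (fun s : ℝ => exp (-(s • Q))) (exp (-(t • Q)) * (-Q)) t := by
    have := hasDerivAt_exp_smul_const (𝕂 := ℝ) (-Q) t
    simp only [smul_neg] at this
    exact this
  have h := (h1.mul_const Z).mul h2
  exact h.congr_deriv (by noncomm_ring)

lemma aux_comm (Q : Matrix (Fin d) (Fin d) ℝ) (t : ℝ) :
    Q * exp (t • Q) = exp (t • Q) * Q :=
  (((Commute.refl Q).smul_right t).exp_right).eq

lemma aux_inv_mul (Q : Matrix (Fin d) (Fin d) ℝ) (t : ℝ) :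
    exp (t • Q) * exp (-(t • Q)) = 1 := by
  rw [← Matrix.exp_add_of_commute _ _ ((Commute.refl (t • Q)).neg_right), add_neg_cancel, exp_zero]

end LinftyAux

lemma transferHasDerivAt {d : ℕ} {f : ℝ → Matrix (Fin d) (Fin d) ℝ}
    {f' : Matrix (Fin d) (Fin d) ℝ} {x : ℝ}
    (h : HasDerivAt f f' x) :
    HasDerivAt f f' x := by
  exact h

attribute [local instance] Matrix.normedAddCommGroup Matrix.normedSpace

/-- The squared Frobenius (Hilbert-Schmidt) norm of a real square matrix. -/
noncomputable def frobeniusNormSq {d : ℕ} (M : Matrix (Fin d) (Fin d) ℝ) : ℝ :=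
  Matrix.trace (Mᵀ * M)

/-- Explicit rotation-constrained moment geodesics with fixed mean:
`A(t) = A₀ · exp(t B) · exp(-t Q)` with `Z = (B + Bᵀ)/2`, `Q = (B - Bᵀ)/2` is a
horizontal curve with `A⁻¹A' = exp(tQ) Z exp(-tQ)` symmetric, constant Frobenius
action density `‖Z‖_HS`, and satisfies `d/dt(A⁻¹A') = Q(A⁻¹A') - (A⁻¹A')Q`. -/
theorem stmt13 (d : ℕ) (hd : 1 ≤ d)
    (A₀ : Matrix (Fin d) (Fin d) ℝ) (hA₀ : IsUnit A₀)
    (B : Matrix (Fin d) (Fin d) ℝ)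
    (Z Q : Matrix (Fin d) (Fin d) ℝ)
    (hZ : Z = ((1 : ℝ) / 2) • (B + Bᵀ)) (hQ : Q = ((1 : ℝ) / 2) • (B - Bᵀ))
    (A : ℝ → Matrix (Fin d) (Fin d) ℝ)
    (hAdef : ∀ t, A t = A₀ * NormedSpace.exp (t • B) * NormedSpace.exp (-(t • Q))) :
    (∀ t, IsUnit (A t)) ∧
    ∃ A' : ℝ → Matrix (Fin d) (Fin d) ℝ,
      (∀ t, HasDerivAt A (A' t) t) ∧
      (∀ t, (A t)⁻¹ * A' t = NormedSpace.exp (t • Q) * Z * NormedSpace.exp (-(t • Q))) ∧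
      (∀ t, ((A t)⁻¹ * A' t)ᵀ = (A t)⁻¹ * A' t) ∧
      (∀ t, Real.sqrt (frobeniusNormSq ((A t)⁻¹ * A' t)) = Real.sqrt (frobeniusNormSq Z)) ∧
      (∀ t, HasDerivAt (fun s => (A s)⁻¹ * A' s)
        (Q * ((A t)⁻¹ * A' t) - ((A t)⁻¹ * A' t) * Q) t) := by
  open NormedSpace in
  -- abbreviations
  have cancel : ∀ {U V : Matrix (Fin d) (Fin d) ℝ}, U * V = 1 →
      ∀ W : Matrix (Fin d) (Fin d) ℝ, U * (V * W) = W := by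
    intro U V h W; rw [← mul_assoc, h, one_mul]
  have hST : ∀ t : ℝ, exp (t • Q) * exp (-(t • Q)) = 1 := fun t => aux_inv_mul Q t
  have hTS : ∀ t : ℝ, exp (-(t • Q)) * exp (t • Q) = 1 := by
    intro t
    have := aux_inv_mul Q (-t)
    rwa [neg_smul, neg_neg] at this
  have hEF : ∀ t : ℝ, exp (t • B) * exp (-(t • B)) = 1 := fun t => aux_inv_mul B t
  have hFE : ∀ t : ℝ, exp (-(t • B)) * exp (t • B) = 1 := by
    intro t
    have := aux_inv_mul B (-t)
    rwa [neg_smul, neg_neg] at this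
  have hA₀det : IsUnit A₀.det := (Matrix.isUnit_iff_isUnit_det A₀).mp hA₀
  have hA₀i1 : A₀ * A₀⁻¹ = 1 := Matrix.mul_nonsing_inv A₀ hA₀det
  have hA₀i2 : A₀⁻¹ * A₀ = 1 := Matrix.nonsing_inv_mul A₀ hA₀det
  have hZsymm : Zᵀ = Z := by
    rw [hZ, transpose_smul, transpose_add, transpose_transpose, add_comm]
  have hQskew : Qᵀ = -Q := by
    rw [hQ, transpose_smul, transpose_sub, transpose_transpose, ← smul_neg, neg_sub]
  have hBZQ : B = Z + Q := by rw [hZ, hQ]; module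
  have hTrS : ∀ t : ℝ, (exp (t • Q))ᵀ = exp (-(t • Q)) := by
    intro t
    rw [← Matrix.exp_transpose, transpose_smul, hQskew, smul_neg]
  have hTrT : ∀ t : ℝ, (exp (-(t • Q)))ᵀ = exp (t • Q) := by
    intro t
    rw [← Matrix.exp_transpose, transpose_neg, transpose_smul, hQskew, smul_neg, neg_neg]
  -- inverse of A t
  have hAinv : ∀ t : ℝ, (A t)⁻¹ = exp (t • Q) * exp (-(t • B)) * A₀⁻¹ := by
    intro t
    apply Matrix.inv_eq_right_inv
    rw [hAdef]
    simp only [mul_assoc]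
    rw [cancel (hTS t), cancel (hEF t)]
    exact hA₀i1
  -- the explicit derivative
  set A' : ℝ → Matrix (Fin d) (Fin d) ℝ := fun t =>
    A₀ * exp (t • B) * B * exp (-(t • Q))
      - A₀ * exp (t • B) * exp (-(t • Q)) * Q with hA'
  -- item (ii)
  have hiAA' : ∀ t : ℝ, (A t)⁻¹ * A' t = exp (t • Q) * Z * exp (-(t • Q)) := by
    intro t
    rw [hAinv t, hA']
    simp only [mul_sub, mul_assoc]
    rw [cancel (hA₀i2), cancel (hA₀i2), cancel (hFE t), cancel (hFE t)]
    rw [show exp (t • Q) * (exp (-(t • Q)) * Q) = Q from cancel (hST t) Q]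
    rw [hBZQ, add_mul, mul_add]
    rw [show exp (t • Q) * (Q * exp (-(t • Q))) = Q from by
      rw [← mul_assoc, ← aux_comm, mul_assoc, hST, mul_one]]
    abel
  -- assemble
  refine ⟨?_, A', ?_, hiAA', ?_, ?_, ?_⟩
  · intro t
    rw [hAdef]
    exact (hA₀.mul (Matrix.isUnit_exp _)).mul (Matrix.isUnit_exp _)
  · intro t
    rw [show A = (fun s : ℝ => A₀ * exp (s • B) * exp (-(s • Q))) from funext hAdef]
    exact transferHasDerivAt (aux_derivA A₀ B Q t)
  · intro t
    rw [hiAA' t, transpose_mul, transpose_mul, hTrS, hTrT, hZsymm, mul_assoc]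
  · intro t
    rw [hiAA' t]
    congr 1
    unfold frobeniusNormSq
    rw [transpose_mul, transpose_mul, hTrS, hTrT, hZsymm]
    simp only [mul_assoc]
    rw [cancel (hTS t), Matrix.trace_mul_comm]
    simp only [mul_assoc, hTS t, mul_one]
  · intro t
    rw [show (fun s : ℝ => (A s)⁻¹ * A' s)
        = fun s : ℝ => exp (s • Q) * Z * exp (-(s • Q)) from funext hiAA', hiAA' t]
    exact transferHasDerivAt (aux_derivM Z Q t)
end

section
/- Two-sided covariance bound along finite-action horizontal curves: Let d ≥ 1, let m : [0,1] → ℝ^d and A : [0,1] → d×d real matrices with A(t) invertible for every t ∈ [0,1], and suppose there are integrable functions m' : [0,1] → ℝ^d and A' : [0,1] → d×d matrices such that m(t) = m(0) + ∫₀ᵗ m'(s) ds and A(t) = A(0) + ∫₀ᵗ A'(s) ds for all t ∈ [0,1]. Set I := ∫₀¹ ( |A(t)⁻¹ m'(t)|² + ‖A(t)⁻¹ A'(t)‖_HS² ) dt and assume I < ∞. Then for every t ∈ [0,1]: e^{−2√I} · A(0) A(0)ᵀ ⪯ A(t) A(t)ᵀ ⪯ e^{2√I} · A(0) A(0)ᵀ,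 where X ⪯ Y means that Y − X is positive semidefinite. -/
open Matrix MeasureTheory

attribute [local instance] Matrix.normedAddCommGroup Matrix.normedSpace

section analysis
open intervalIntegral Set


lemma diag_null (t : ℝ) :
    ((volume.restrict (Set.Ioc (0:ℝ) t)).prod (volume.restrict (Set.Ioc (0:ℝ) t)))
      {p : ℝ × ℝ | p.1 = p.2} = 0 := by
  set ν := volume.restrict (Set.Ioc (0:ℝ) t) with hν
  have hd : MeasurableSet {p : ℝ × ℝ | p.1 = p.2} :=
    measurableSet_eq_fun measurable_fst measurable_snd
  rw [MeasureTheory.Measure.prod_apply hd]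
  have h0 : ∀ x : ℝ, ν (Prod.mk x ⁻¹' {p : ℝ × ℝ | p.1 = p.2}) = 0 := by
    intro x
    have hx : (Prod.mk x ⁻¹' {p : ℝ × ℝ | p.1 = p.2}) = {x} := by ext r; simp [eq_comm]
    rw [hx, hν, Measure.restrict_apply (measurableSet_singleton x)]
    exact measure_mono_null (Set.inter_subset_left) (by simp)
  simp [h0]

lemma half_int {t : ℝ} (f g : ℝ → ℝ)
    (hf : IntervalIntegrable f volume 0 t) (hg : IntervalIntegrable g volume 0 t) :
    ∫ p in {p : ℝ × ℝ | p.2 ≤ p.1}, f p.1 * g p.2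
        ∂((volume.restrict (Set.Ioc (0:ℝ) t)).prod (volume.restrict (Set.Ioc (0:ℝ) t)))
      = ∫ s in Set.Ioc (0:ℝ) t, (f s * ∫ r in (0:ℝ)..s, g r) := by
  set ν := volume.restrict (Set.Ioc (0:ℝ) t) with hν
  have hS : MeasurableSet {p : ℝ × ℝ | p.2 ≤ p.1} :=
    measurableSet_le measurable_snd measurable_fst
  have hprod : Integrable (fun p : ℝ × ℝ => f p.1 * g p.2) (ν.prod ν) :=
    hf.1.mul_prod hg.1
  rw [← MeasureTheory.integral_indicator hS]
  rw [integral_prod _ (hprod.indicator hS)]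
  apply MeasureTheory.integral_congr_ae
  filter_upwards [ae_restrict_mem measurableSet_Ioc] with s hs
  have h1 : (fun r => Set.indicator {p : ℝ × ℝ | p.2 ≤ p.1}
        (fun p : ℝ × ℝ => f p.1 * g p.2) (s, r))
      = fun r => Set.indicator (Set.Iic s) (fun r => f s * g r) r := by
    ext r
    by_cases h : r ≤ s <;> simp [Set.indicator, h]
  rw [h1, MeasureTheory.integral_indicator measurableSet_Iic, hν,
    Measure.restrict_restrict measurableSet_Iic]
  have h2 : Set.Iic s ∩ Set.Ioc 0 t = Set.Ioc 0 s := by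
    ext r
    constructor
    · rintro ⟨h1', h2', _⟩; exact ⟨h2', h1'⟩
    · rintro ⟨h1', h2'⟩; exact ⟨h2', h1', h2'.trans hs.2⟩
  rw [h2, MeasureTheory.integral_const_mul, ← intervalIntegral.integral_of_le hs.1.le]

lemma fubini_primitive {t : ℝ} (ht : 0 ≤ t) {φ ψ : ℝ → ℝ}
    (hφ : IntervalIntegrable φ volume 0 t) (hψ : IntervalIntegrable ψ volume 0 t) :
    (∫ s in (0:ℝ)..t, φ s) * (∫ s in (0:ℝ)..t, ψ s)
      = ∫ s in (0:ℝ)..t,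
          ((φ s * ∫ r in (0:ℝ)..s, ψ r) + (ψ s * ∫ r in (0:ℝ)..s, φ r)) := by
  set ν := volume.restrict (Set.Ioc (0:ℝ) t) with hν
  set S := {p : ℝ × ℝ | p.2 ≤ p.1} with hSdef
  have hS : MeasurableSet S := measurableSet_le measurable_snd measurable_fst
  have hprod : Integrable (fun p : ℝ × ℝ => φ p.1 * ψ p.2) (ν.prod ν) :=
    hφ.1.mul_prod hψ.1
  -- swap identity for the complement
  have hswap : ∫ p in Sᶜ, φ p.1 * ψ p.2 ∂(ν.prod ν)
      = ∫ p in S, ψ p.1 * φ p.2 ∂(ν.prod ν) := by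
    have hS' : MeasurableSet {p : ℝ × ℝ | p.1 ≤ p.2} :=
      measurableSet_le measurable_fst measurable_snd
    have e1 : ∫ p in Sᶜ, φ p.1 * ψ p.2 ∂(ν.prod ν)
        = ∫ p in {p : ℝ × ℝ | p.1 ≤ p.2}, φ p.1 * ψ p.2 ∂(ν.prod ν) := by
      apply MeasureTheory.setIntegral_congr_set
      rw [MeasureTheory.ae_eq_set]
      constructor
      · apply measure_mono_null ?_ (diag_null t)
        rintro ⟨a, b⟩ ⟨h1, h2⟩
        simp only [Set.mem_compl_iff, Set.mem_setOf_eq, not_le, not_lt, not_not, hSdef] at h1 h2 ⊢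
        linarith
      · apply measure_mono_null ?_ (diag_null t)
        rintro ⟨a, b⟩ ⟨h1, h2⟩
        simp only [Set.mem_compl_iff, Set.mem_setOf_eq, not_le, not_lt, not_not, hSdef] at h1 h2 ⊢
        linarith
    rw [e1, ← MeasureTheory.integral_indicator hS', ← MeasureTheory.integral_indicator hS]
    rw [← MeasureTheory.integral_prod_swap]
    congr 1
    ext p
    by_cases h : p.1 ≤ p.2
    · simp [Set.indicator, h, hSdef, mul_comm]
    · simp [Set.indicator, h, hSdef, mul_comm]
  have half1 := half_int φ ψ hφ hψ
  have half2 := half_int ψ φ hψ hφ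
  have hFψ : ContinuousOn (fun s => ∫ r in (0:ℝ)..s, ψ r) (Set.uIcc 0 t) :=
    intervalIntegral.continuousOn_primitive_interval' hψ Set.left_mem_uIcc
  have hFφ : ContinuousOn (fun s => ∫ r in (0:ℝ)..s, φ r) (Set.uIcc 0 t) :=
    intervalIntegral.continuousOn_primitive_interval' hφ Set.left_mem_uIcc
  have i1 : IntervalIntegrable (fun s => φ s * ∫ r in (0:ℝ)..s, ψ r) volume 0 t :=
    hφ.mul_continuousOn hFψ
  have i2 : IntervalIntegrable (fun s => ψ s * ∫ r in (0:ℝ)..s, φ r) volume 0 t :=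
    hψ.mul_continuousOn hFφ
  calc (∫ s in (0:ℝ)..t, φ s) * (∫ s in (0:ℝ)..t, ψ s)
      = (∫ s, φ s ∂ν) * (∫ s, ψ s ∂ν) := by
        rw [intervalIntegral.integral_of_le ht, intervalIntegral.integral_of_le ht]
    _ = ∫ p, φ p.1 * ψ p.2 ∂(ν.prod ν) := (MeasureTheory.integral_prod_mul φ ψ).symm
    _ = (∫ p in S, φ p.1 * ψ p.2 ∂(ν.prod ν)) + ∫ p in Sᶜ, φ p.1 * ψ p.2 ∂(ν.prod ν) :=
        (MeasureTheory.integral_add_compl hS hprod).symm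
    _ = (∫ s in Set.Ioc (0:ℝ) t, (φ s * ∫ r in (0:ℝ)..s, ψ r))
          + ∫ s in Set.Ioc (0:ℝ) t, (ψ s * ∫ r in (0:ℝ)..s, φ r) := by
        rw [hswap, half1, half2]
    _ = ∫ s in Set.Ioc (0:ℝ) t,
          ((φ s * ∫ r in (0:ℝ)..s, ψ r) + (ψ s * ∫ r in (0:ℝ)..s, φ r)) :=
        (MeasureTheory.integral_add i1.1 i2.1).symm
    _ = ∫ s in (0:ℝ)..t,
          ((φ s * ∫ r in (0:ℝ)..s, ψ r) + (ψ s * ∫ r in (0:ℝ)..s, φ r)) :=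
        (intervalIntegral.integral_of_le ht).symm

lemma prod_rule {T : ℝ} (hT : 0 ≤ T) {φ ψ u v : ℝ → ℝ}
    (hφ : IntervalIntegrable φ volume 0 T) (hψ : IntervalIntegrable ψ volume 0 T)
    (hu : ∀ s ∈ Set.Icc (0:ℝ) T, u s = u 0 + ∫ r in (0:ℝ)..s, φ r)
    (hv : ∀ s ∈ Set.Icc (0:ℝ) T, v s = v 0 + ∫ r in (0:ℝ)..s, ψ r) :
    ∀ t ∈ Set.Icc (0:ℝ) T,
      u t * v t = u 0 * v 0 + ∫ s in (0:ℝ)..t, (φ s * v s + ψ s * u s) := by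
  intro t ht
  have h0t : (0:ℝ) ≤ t := ht.1
  have hsub : Set.uIcc (0:ℝ) t ⊆ Set.uIcc (0:ℝ) T := by
    rw [Set.uIcc_of_le h0t, Set.uIcc_of_le hT]
    exact Set.Icc_subset_Icc le_rfl ht.2
  have hφt : IntervalIntegrable φ volume 0 t := hφ.mono_set hsub
  have hψt : IntervalIntegrable ψ volume 0 t := hψ.mono_set hsub
  have key := fubini_primitive h0t hφt hψt
  have hFψ : ContinuousOn (fun s => ∫ r in (0:ℝ)..s, ψ r) (Set.uIcc 0 t) :=
    intervalIntegral.continuousOn_primitive_interval' hψt Set.left_mem_uIcc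
  have hFφ : ContinuousOn (fun s => ∫ r in (0:ℝ)..s, φ r) (Set.uIcc 0 t) :=
    intervalIntegral.continuousOn_primitive_interval' hφt Set.left_mem_uIcc
  have i1 : IntervalIntegrable (fun s => φ s * ∫ r in (0:ℝ)..s, ψ r) volume 0 t :=
    hφt.mul_continuousOn hFψ
  have i2 : IntervalIntegrable (fun s => ψ s * ∫ r in (0:ℝ)..s, φ r) volume 0 t :=
    hψt.mul_continuousOn hFφ
  have c1 : IntervalIntegrable (fun s => v 0 * φ s + u 0 * ψ s) volume 0 t :=
    (hφt.const_mul (v 0)).add (hψt.const_mul (u 0))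
  have e1 : (∫ s in (0:ℝ)..t, (φ s * v s + ψ s * u s))
      = ∫ s in (0:ℝ)..t, ((v 0 * φ s + u 0 * ψ s)
          + ((φ s * ∫ r in (0:ℝ)..s, ψ r) + (ψ s * ∫ r in (0:ℝ)..s, φ r))) := by
    apply intervalIntegral.integral_congr
    intro s hs
    rw [Set.uIcc_of_le h0t] at hs
    have hs' : s ∈ Set.Icc (0:ℝ) T := ⟨hs.1, hs.2.trans ht.2⟩
    dsimp only
    rw [hu s hs', hv s hs']
    ring
  rw [hu t ht, hv t ht, e1,
    intervalIntegral.integral_add c1 (i1.add i2),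
    intervalIntegral.integral_add (hφt.const_mul (v 0)) (hψt.const_mul (u 0)),
    intervalIntegral.integral_const_mul, intervalIntegral.integral_const_mul, ← key]
  ring

lemma pow_rule {T : ℝ} (hT : 0 ≤ T) {φ w : ℝ → ℝ}
    (hφ : IntervalIntegrable φ volume 0 T)
    (hw : ∀ s ∈ Set.Icc (0:ℝ) T, w s = w 0 + ∫ r in (0:ℝ)..s, φ r) :
    ∀ n : ℕ, ∀ t ∈ Set.Icc (0:ℝ) T,
      w t ^ (n + 1) = w 0 ^ (n + 1)
        + ∫ s in (0:ℝ)..t, ((n + 1 : ℝ) * (φ s * w s ^ n)) := by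
  have hwc : ContinuousOn w (Set.Icc 0 T) := by
    have : ContinuousOn (fun s => w 0 + ∫ r in (0:ℝ)..s, φ r) (Set.uIcc 0 T) :=
      continuousOn_const.add
        (intervalIntegral.continuousOn_primitive_interval' hφ Set.left_mem_uIcc)
    rw [Set.uIcc_of_le hT] at this
    exact this.congr hw
  intro n
  induction n with
  | zero =>
      intro t ht
      have := hw t ht
      simpa using this
  | succ n ih =>
      intro t ht
      have hψ : IntervalIntegrable (fun s => (n + 1 : ℝ) * (φ s * w s ^ n)) volume 0 T := by
        refine IntervalIntegrable.const_mul ?_ _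
        exact hφ.mul_continuousOn (by
          rw [Set.uIcc_of_le hT]; exact hwc.pow n)
      have := prod_rule hT hφ hψ hw (fun s hs => by
        have := ih s hs
        simpa using this) t ht
      calc w t ^ (n + 2) = w t * w t ^ (n + 1) := by ring
        _ = w 0 * w 0 ^ (n + 1)
            + ∫ s in (0:ℝ)..t, (φ s * w s ^ (n + 1)
                + ((n + 1 : ℝ) * (φ s * w s ^ n)) * w s) := this
        _ = w 0 ^ (n + 2) + ∫ s in (0:ℝ)..t, ((n + 1 + 1 : ℝ) * (φ s * w s ^ (n + 1))) := by
            rw [show w 0 * w 0 ^ (n+1) = w 0 ^ (n+2) by ring]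
            congr 1
            apply intervalIntegral.integral_congr
            intro s _
            ring
        _ = w 0 ^ (n + 1 + 1) + ∫ s in (0:ℝ)..t, ((((n:ℕ) + 1 : ℕ) + 1 : ℝ) * (φ s * w s ^ (n + 1))) := by
            congr 1
            apply intervalIntegral.integral_congr
            intro s _
            dsimp only
            push_cast
            ring

section
variable {T : ℝ} {f ψ g : ℝ → ℝ}

set_option maxHeartbeats 2000000 in
lemma gronwall_up (hT : 0 ≤ T)
    (hψ : IntervalIntegrable ψ volume 0 T)
    (hg : IntervalIntegrable g volume 0 T)
    (hg0 : ∀ s ∈ Set.Icc (0:ℝ) T, 0 ≤ g s)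
    (hf : ∀ t ∈ Set.Icc (0:ℝ) T, f t = f 0 + ∫ s in (0:ℝ)..t, ψ s)
    (hf0 : ∀ s ∈ Set.Icc (0:ℝ) T, 0 ≤ f s)
    (hb : ∀ s ∈ Set.Icc (0:ℝ) T, ψ s ≤ 2 * (g s * f s)) :
    ∀ t ∈ Set.Icc (0:ℝ) T, f t ≤ f 0 * Real.exp (2 * ∫ s in (0:ℝ)..t, g s) := by
  obtain ⟨G, hG⟩ : ∃ G : ℝ → ℝ, ∀ t, G t = ∫ s in (0:ℝ)..t, g s :=
    ⟨_, fun _ => rfl⟩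
  obtain ⟨c, hc⟩ : ∃ c : ℕ → ℝ → ℝ, ∀ k s, c k s = (2 * G s) ^ k / (Nat.factorial k : ℝ) :=
    ⟨_, fun _ _ => rfl⟩
  have hfc : ContinuousOn f (Set.Icc 0 T) := by
    have : ContinuousOn (fun s => f 0 + ∫ r in (0:ℝ)..s, ψ r) (Set.uIcc 0 T) :=
      continuousOn_const.add
        (intervalIntegral.continuousOn_primitive_interval' hψ Set.left_mem_uIcc)
    rw [Set.uIcc_of_le hT] at this
    exact this.congr hf
  have hGc : ContinuousOn G (Set.Icc 0 T) := by
    have := intervalIntegral.continuousOn_primitive_interval' hg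
      (Set.left_mem_uIcc (a := (0:ℝ)) (b := T))
    rw [Set.uIcc_of_le hT] at this
    exact this.congr (fun s _ => hG s)
  have hcc : ∀ k : ℕ, ContinuousOn (fun s => c k s) (Set.Icc 0 T) := by
    intro k
    exact (((continuousOn_const.mul hGc).pow k).div_const _).congr
      (fun s _ => hc k s)
  have hsub : ∀ t ∈ Set.Icc (0:ℝ) T, Set.uIcc (0:ℝ) t ⊆ Set.uIcc (0:ℝ) T := by
    intro t ht
    rw [Set.uIcc_of_le ht.1, Set.uIcc_of_le hT]
    exact Set.Icc_subset_Icc le_rfl ht.2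
  -- max of f
  obtain ⟨x0, hx0mem, hx0⟩ := isCompact_Icc.exists_isMaxOn ⟨0, le_refl 0, hT⟩ hfc
  obtain ⟨M, hMdef⟩ : ∃ M : ℝ, M = f x0 := ⟨_, rfl⟩
  have hM0 : 0 ≤ M := by rw [hMdef]; exact hf0 x0 hx0mem
  have hfM : ∀ s ∈ Set.Icc (0:ℝ) T, f s ≤ M := fun s hs => by
    rw [hMdef]; exact hx0 hs
  -- power rule for G
  have hGform : ∀ s ∈ Set.Icc (0:ℝ) T, G s = G 0 + ∫ r in (0:ℝ)..s, g r := by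
    intro s _; rw [hG s, hG 0]; simp
  have powG := pow_rule hT hg hGform
  -- key integral identity
  have ckey : ∀ (k : ℕ), ∀ t ∈ Set.Icc (0:ℝ) T,
      (∫ s in (0:ℝ)..t, 2 * (g s * c k s)) = c (k + 1) t := by
    intro k t ht
    have hgt : IntervalIntegrable g volume 0 t := hg.mono_set (hsub t ht)
    have hGck : ContinuousOn (fun s => G s ^ k) (Set.uIcc 0 t) := by
      apply ContinuousOn.pow
      exact hGc.mono (by rw [Set.uIcc_of_le ht.1]; exact Set.Icc_subset_Icc le_rfl ht.2)
    have e1 : (∫ s in (0:ℝ)..t, 2 * (g s * c k s))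
        = (2 ^ (k+1) / (Nat.factorial k : ℝ)) * ∫ s in (0:ℝ)..t, g s * G s ^ k := by
      rw [← intervalIntegral.integral_const_mul]
      apply intervalIntegral.integral_congr
      intro s _
      simp only [hc, mul_pow]
      ring
    have e2 := powG k t ht
    have hG0 : G 0 = 0 := by rw [hG]; simp
    rw [hG0] at e2
    simp only [zero_pow (Nat.succ_ne_zero k)] at e2
    rw [intervalIntegral.integral_const_mul] at e2
    -- e2 : G t ^ (k+1) = 0 + (k+1) * ∫ g G^k
    have e3 : (∫ s in (0:ℝ)..t, g s * G s ^ k) = G t ^ (k+1) / ((k:ℝ)+1) := by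
      rw [e2]
      field_simp
      ring
    have hfact : ((Nat.factorial (k+1) : ℕ) : ℝ) = ((k:ℝ)+1) * (Nat.factorial k : ℝ) := by
      rw [Nat.factorial_succ]; push_cast; ring
    rw [e1, e3]
    simp only [hc, mul_pow, hfact]
    rw [div_mul_div_comm, mul_comm ((Nat.factorial k : ℝ)) ((k:ℝ)+1)]
  -- main induction
  have claim : ∀ n : ℕ, ∀ t ∈ Set.Icc (0:ℝ) T,
      f t ≤ f 0 * (∑ k ∈ Finset.range n, c k t) + M * c n t := by
    intro n
    induction n with
    | zero =>
        intro t ht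
        simpa [hc] using hfM t ht
    | succ n ih =>
        intro t ht
        have h0t : (0:ℝ) ≤ t := ht.1
        have hgt : IntervalIntegrable g volume 0 t := hg.mono_set (hsub t ht)
        have hψt : IntervalIntegrable ψ volume 0 t := hψ.mono_set (hsub t ht)
        have hfct : ContinuousOn f (Set.uIcc 0 t) := by
          rw [Set.uIcc_of_le h0t]
          exact hfc.mono (Set.Icc_subset_Icc le_rfl ht.2)
        have hcct : ∀ k : ℕ, ContinuousOn (fun s => c k s) (Set.uIcc 0 t) := by
          intro k
          rw [Set.uIcc_of_le h0t]
          exact (hcc k).mono (Set.Icc_subset_Icc le_rfl ht.2)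
        have hgf : IntervalIntegrable (fun s => 2 * (g s * f s)) volume 0 t :=
          (hgt.mul_continuousOn hfct).const_mul 2
        have hXc : ContinuousOn
            (fun s => f 0 * (∑ k ∈ Finset.range n, c k s) + M * c n s) (Set.uIcc 0 t) := by
          apply ContinuousOn.add
          · exact continuousOn_const.mul
              (continuousOn_finset_sum _ (fun k _ => hcct k))
          · exact continuousOn_const.mul (hcct n)
        have hgX : IntervalIntegrable
            (fun s => 2 * (g s * (f 0 * (∑ k ∈ Finset.range n, c k s) + M * c n s)))
            volume 0 t := (hgt.mul_continuousOn hXc).const_mul 2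
        have step1 : f t ≤ f 0 + ∫ s in (0:ℝ)..t, 2 * (g s * f s) := by
          rw [hf t ht]
          gcongr
          apply intervalIntegral.integral_mono_on h0t hψt hgf
          intro s hs
          exact hb s ⟨hs.1, hs.2.trans ht.2⟩
        have step2 : (∫ s in (0:ℝ)..t, 2 * (g s * f s))
            ≤ ∫ s in (0:ℝ)..t,
                2 * (g s * (f 0 * (∑ k ∈ Finset.range n, c k s) + M * c n s)) := by
          apply intervalIntegral.integral_mono_on h0t hgf hgX
          intro s hs
          have hs' : s ∈ Set.Icc (0:ℝ) T := ⟨hs.1, hs.2.trans ht.2⟩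
          have := ih s hs'
          have hgs := hg0 s hs'
          gcongr
        have hik : ∀ k : ℕ, IntervalIntegrable
            (fun s => f 0 * (2 * (g s * c k s))) volume 0 t := by
          intro k
          exact ((hgt.mul_continuousOn (hcct k)).const_mul 2).const_mul (f 0)
        have step3 : (∫ s in (0:ℝ)..t,
              2 * (g s * (f 0 * (∑ k ∈ Finset.range n, c k s) + M * c n s)))
            = (∑ k ∈ Finset.range n, f 0 * c (k+1) t) + M * c (n+1) t := by
          have e : (∫ s in (0:ℝ)..t,
                2 * (g s * (f 0 * (∑ k ∈ Finset.range n, c k s) + M * c n s)))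
              = ∫ s in (0:ℝ)..t,
                  ((∑ k ∈ Finset.range n, f 0 * (2 * (g s * c k s)))
                    + M * (2 * (g s * c n s))) := by
            apply intervalIntegral.integral_congr
            intro s _
            dsimp only
            have e' : ∀ k ∈ Finset.range n,
                f 0 * (2 * (g s * c k s)) = (f 0 * (2 * g s)) * c k s :=
              fun k _ => by ring
            rw [Finset.sum_congr rfl e', ← Finset.mul_sum]
            ring
          have hsint : IntervalIntegrable
              (fun s => ∑ k ∈ Finset.range n, f 0 * (2 * (g s * c k s))) volume 0 t := by
            have h' := IntervalIntegrable.sum (μ := volume) (a := (0:ℝ)) (b := t)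
              (Finset.range n) (f := fun k s => f 0 * (2 * (g s * c k s)))
              (fun k _ => hik k)
            have heq : (∑ i ∈ Finset.range n, fun s => f 0 * (2 * (g s * c i s)))
                = fun s => ∑ k ∈ Finset.range n, f 0 * (2 * (g s * c k s)) := by
              funext s
              simp
            rw [heq] at h'
            exact h'
          have hMn : IntervalIntegrable (fun s => M * (2 * (g s * c n s))) volume 0 t :=
            ((hgt.mul_continuousOn (hcct n)).const_mul 2).const_mul M
          calc (∫ s in (0:ℝ)..t,
                2 * (g s * (f 0 * (∑ k ∈ Finset.range n, c k s) + M * c n s)))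
              = ∫ s in (0:ℝ)..t,
                  ((∑ k ∈ Finset.range n, f 0 * (2 * (g s * c k s)))
                    + M * (2 * (g s * c n s))) := e
            _ = (∫ s in (0:ℝ)..t, ∑ k ∈ Finset.range n, f 0 * (2 * (g s * c k s)))
                  + ∫ s in (0:ℝ)..t, M * (2 * (g s * c n s)) :=
                intervalIntegral.integral_add hsint hMn
            _ = (∑ k ∈ Finset.range n, ∫ s in (0:ℝ)..t, f 0 * (2 * (g s * c k s)))
                  + M * ∫ s in (0:ℝ)..t, 2 * (g s * c n s) := by
                rw [intervalIntegral.integral_finset_sum (fun k _ => hik k),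
                  intervalIntegral.integral_const_mul]
            _ = (∑ k ∈ Finset.range n, f 0 * c (k+1) t) + M * c (n+1) t := by
                rw [ckey n t ht]
                congr 1
                apply Finset.sum_congr rfl
                intro k _
                rw [intervalIntegral.integral_const_mul, ckey k t ht]
        have hc01 : c 0 t = 1 := by simp [hc]
        calc f t ≤ f 0 + ∫ s in (0:ℝ)..t, 2 * (g s * f s) := step1
          _ ≤ f 0 + ((∑ k ∈ Finset.range n, f 0 * c (k+1) t) + M * c (n+1) t) := by
              rw [← step3]; linarith [step2]
          _ = f 0 * (∑ k ∈ Finset.range (n+1), c k t) + M * c (n+1) t := by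
              rw [Finset.sum_range_succ' (fun k => c k t) n, hc01, ← Finset.mul_sum]
              ring
  -- take limits
  intro t ht
  have hsum : HasSum (fun k => c k t) (Real.exp (2 * G t)) := by
    simp only [hc]
    rw [Real.exp_eq_exp_ℝ]
    exact NormedSpace.expSeries_div_hasSum_exp (2 * G t)
  have h1 : Filter.Tendsto (fun n => ∑ k ∈ Finset.range n, c k t)
      Filter.atTop (nhds (Real.exp (2 * G t))) := hsum.tendsto_sum_nat
  have h2 : Filter.Tendsto (fun n : ℕ => c n t) Filter.atTop (nhds 0) := by
    simpa [hc] using FloorSemiring.tendsto_pow_div_factorial_atTop (2 * G t)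
  have h3 : Filter.Tendsto
      (fun n => f 0 * (∑ k ∈ Finset.range n, c k t) + M * c n t)
      Filter.atTop (nhds (f 0 * Real.exp (2 * G t) + M * 0)) :=
    ((tendsto_const_nhds.mul h1).add (tendsto_const_nhds.mul h2))
  have h4 := ge_of_tendsto' h3 (fun n => claim n t ht)
  have h5 : f t ≤ f 0 * Real.exp (2 * G t) := by simpa using h4
  rw [hG t] at h5
  exact h5
end

variable {T : ℝ} {f ψ g : ℝ → ℝ} in
lemma gronwall_low (hT : 0 ≤ T)
    (hψ : IntervalIntegrable ψ volume 0 T)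
    (hg : IntervalIntegrable g volume 0 T)
    (hg0 : ∀ s ∈ Set.Icc (0:ℝ) T, 0 ≤ g s)
    (hf : ∀ t ∈ Set.Icc (0:ℝ) T, f t = f 0 + ∫ s in (0:ℝ)..t, ψ s)
    (hf0 : ∀ s ∈ Set.Icc (0:ℝ) T, 0 ≤ f s)
    (hb : ∀ s ∈ Set.Icc (0:ℝ) T, |ψ s| ≤ 2 * (g s * f s)) :
    ∀ t ∈ Set.Icc (0:ℝ) T,
      f 0 * Real.exp (-(2 * ∫ s in (0:ℝ)..t, g s)) ≤ f t := by
  intro t0 ht0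
  have h00 : (0:ℝ) ≤ t0 := ht0.1
  have hsub0 : Set.uIcc (0:ℝ) t0 ⊆ Set.uIcc (0:ℝ) T := by
    rw [Set.uIcc_of_le h00, Set.uIcc_of_le hT]
    exact Set.Icc_subset_Icc le_rfl ht0.2
  have hψt0 : IntervalIntegrable ψ volume 0 t0 := hψ.mono_set hsub0
  have hgt0 : IntervalIntegrable g volume 0 t0 := hg.mono_set hsub0
  have hψr : IntervalIntegrable (fun s => -ψ (t0 - s)) volume 0 t0 := by
    have h' := (hψt0.comp_sub_left t0).symm
    rw [sub_zero, sub_self] at h'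
    exact h'.neg
  have hgr : IntervalIntegrable (fun s => g (t0 - s)) volume 0 t0 := by
    have h' := (hgt0.comp_sub_left t0).symm
    rw [sub_zero, sub_self] at h'
    exact h'
  have hmem : ∀ s ∈ Set.Icc (0:ℝ) t0, t0 - s ∈ Set.Icc (0:ℝ) T := by
    intro s hs
    exact ⟨by linarith [hs.2], by linarith [hs.1, ht0.2]⟩
  have hfr : ∀ s ∈ Set.Icc (0:ℝ) t0,
      f (t0 - s) = f (t0 - 0) + ∫ r in (0:ℝ)..s, -ψ (t0 - r) := by
    intro s hs
    have hms : t0 - s ∈ Set.Icc (0:ℝ) T := hmem s hs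
    have h1 : IntervalIntegrable ψ volume 0 (t0 - s) := hψ.mono_set (by
      rw [Set.uIcc_of_le (by linarith [hs.2] : (0:ℝ) ≤ t0 - s), Set.uIcc_of_le hT]
      exact Set.Icc_subset_Icc le_rfl (by linarith [hs.1, ht0.2]))
    have h2 : IntervalIntegrable ψ volume (t0 - s) t0 := hψ.mono_set (by
      rw [Set.uIcc_of_le (by linarith [hs.1] : t0 - s ≤ t0), Set.uIcc_of_le hT]
      exact Set.Icc_subset_Icc (by linarith [hs.2]) ht0.2)
    rw [intervalIntegral.integral_neg, intervalIntegral.integral_comp_sub_left ψ t0,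
      sub_zero, hf (t0 - s) hms, hf t0 ht0]
    have hadd := intervalIntegral.integral_add_adjacent_intervals h1 h2
    linarith [hadd]
  have key := gronwall_up (T := t0) (f := fun s => f (t0 - s))
    (ψ := fun s => -ψ (t0 - s)) (g := fun s => g (t0 - s)) h00 hψr hgr
    (fun s hs => hg0 _ (hmem s hs)) hfr (fun s hs => hf0 _ (hmem s hs))
    (fun s hs => by
      have := hb _ (hmem s hs)
      have h' : -ψ (t0 - s) ≤ |ψ (t0 - s)| := neg_le_abs _
      linarith) t0 ⟨h00, le_refl t0⟩
  simp only [sub_self, sub_zero] at key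
  -- key : f 0 ≤ f t0 * Real.exp (2 * ∫ s in 0..t0, g (t0 - s))
  have hrev : (∫ s in (0:ℝ)..t0, g (t0 - s)) = ∫ s in (0:ℝ)..t0, g s := by
    rw [intervalIntegral.integral_comp_sub_left g t0, sub_zero, sub_self]
  rw [hrev] at key
  rw [Real.exp_neg, ← div_eq_mul_inv, div_le_iff₀ (Real.exp_pos _)]
  exact key

end analysis


lemma frob_eq_sum {d : ℕ} (M : Matrix (Fin d) (Fin d) ℝ) :
    frobeniusNormSq M = ∑ j, ∑ i, (M i j)^2 := by
  unfold frobeniusNormSq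
  rw [Matrix.trace]
  simp [Matrix.diag, Matrix.mul_apply, sq]

lemma frob_nonneg {d : ℕ} (M : Matrix (Fin d) (Fin d) ℝ) : 0 ≤ frobeniusNormSq M := by
  rw [frob_eq_sum]; positivity

lemma frob_transpose {d : ℕ} (M : Matrix (Fin d) (Fin d) ℝ) :
    frobeniusNormSq Mᵀ = frobeniusNormSq M := by
  rw [frob_eq_sum, frob_eq_sum, Finset.sum_comm]
  simp [Matrix.transpose_apply]

lemma mat_cs {d : ℕ} (M : Matrix (Fin d) (Fin d) ℝ) (y : Fin d → ℝ) :
    |(M *ᵥ y) ⬝ᵥ y| ≤ Real.sqrt (frobeniusNormSq M) * (y ⬝ᵥ y) := by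
  have hyy : y ⬝ᵥ y = ∑ i, (y i)^2 := by simp [dotProduct, sq]
  have hS : (0:ℝ) ≤ ∑ i, (y i)^2 := by positivity
  have h1 : ((M *ᵥ y) ⬝ᵥ y)^2 ≤ (∑ i, ((M *ᵥ y) i)^2) * ∑ i, (y i)^2 :=
    Finset.sum_mul_sq_le_sq_mul_sq _ _ _
  have h2 : (∑ i, ((M *ᵥ y) i)^2) ≤ frobeniusNormSq M * ∑ i, (y i)^2 := by
    rw [frob_eq_sum, Finset.sum_comm, Finset.sum_mul]
    apply Finset.sum_le_sum
    intro i _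
    have : ((M *ᵥ y) i)^2 ≤ (∑ j, (M i j)^2) * ∑ j, (y j)^2 := by
      have := Finset.sum_mul_sq_le_sq_mul_sq Finset.univ (fun j => M i j) y
      simpa [Matrix.mulVec, dotProduct] using this
    exact this
  have h3 : ((M *ᵥ y) ⬝ᵥ y)^2 ≤ frobeniusNormSq M * (∑ i, (y i)^2)^2 := by
    calc ((M *ᵥ y) ⬝ᵥ y)^2 ≤ (∑ i, ((M *ᵥ y) i)^2) * ∑ i, (y i)^2 := h1
      _ ≤ (frobeniusNormSq M * ∑ i, (y i)^2) * ∑ i, (y i)^2 :=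
          mul_le_mul_of_nonneg_right h2 hS
      _ = frobeniusNormSq M * (∑ i, (y i)^2)^2 := by ring
  calc |(M *ᵥ y) ⬝ᵥ y| = Real.sqrt (((M *ᵥ y) ⬝ᵥ y)^2) := (Real.sqrt_sq_eq_abs _).symm
    _ ≤ Real.sqrt (frobeniusNormSq M * (∑ i, (y i)^2)^2) := Real.sqrt_le_sqrt h3
    _ = Real.sqrt (frobeniusNormSq M) * (∑ i, (y i)^2) := by
        rw [Real.sqrt_mul (frob_nonneg M), Real.sqrt_sq hS]
    _ = Real.sqrt (frobeniusNormSq M) * (y ⬝ᵥ y) := by rw [hyy]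

lemma quad_eq {d : ℕ} (A : Matrix (Fin d) (Fin d) ℝ) (x : Fin d → ℝ) :
    x ⬝ᵥ ((A * Aᵀ) *ᵥ x) = (Aᵀ *ᵥ x) ⬝ᵥ (Aᵀ *ᵥ x) := by
  rw [← Matrix.mulVec_mulVec, Matrix.dotProduct_mulVec, Matrix.mulVec_transpose]


set_option maxHeartbeats 1000000 in
/-- Two-sided covariance bound along finite-action horizontal curves:
`e^{-2√I} A(0)A(0)ᵀ ⪯ A(t)A(t)ᵀ ⪯ e^{2√I} A(0)A(0)ᵀ` for `t ∈ [0,1]`, where `I`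
is the action `∫₀¹ (|A⁻¹m'|² + ‖A⁻¹A'‖_HS²) dt`. -/
theorem stmt14 (d : ℕ) (hd : 1 ≤ d)
    (m : ℝ → (Fin d → ℝ)) (A : ℝ → Matrix (Fin d) (Fin d) ℝ)
    (hAunit : ∀ t ∈ Set.Icc (0:ℝ) 1, IsUnit (A t))
    (m' : ℝ → (Fin d → ℝ)) (A' : ℝ → Matrix (Fin d) (Fin d) ℝ)
    (hm'int : IntervalIntegrable m' volume 0 1)
    (hA'int : @IntervalIntegrable _ UniformSpace.toTopologicalSpace NormedAddGroup.toENormedAddMonoid A' volume 0 1)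
    (hm : ∀ t ∈ Set.Icc (0:ℝ) 1, m t = m 0 + ∫ s in (0:ℝ)..t, m' s)
    (hA : ∀ t ∈ Set.Icc (0:ℝ) 1, A t = A 0 + ∫ s in (0:ℝ)..t, A' s)
    (I : ℝ)
    (hIdef : I = ∫ t in (0:ℝ)..1,
      (((A t)⁻¹ *ᵥ m' t) ⬝ᵥ ((A t)⁻¹ *ᵥ m' t) + frobeniusNormSq ((A t)⁻¹ * A' t)))
    (hIfin : IntervalIntegrable (fun t =>
      ((A t)⁻¹ *ᵥ m' t) ⬝ᵥ ((A t)⁻¹ *ᵥ m' t) + frobeniusNormSq ((A t)⁻¹ * A' t))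
      volume 0 1) :
    ∀ t ∈ Set.Icc (0:ℝ) 1,
      (A t * (A t)ᵀ - Real.exp (-2 * Real.sqrt I) • (A 0 * (A 0)ᵀ)).PosSemidef ∧
      (Real.exp (2 * Real.sqrt I) • (A 0 * (A 0)ᵀ) - A t * (A t)ᵀ).PosSemidef := by
  have h01 : (0:ℝ) ≤ 1 := by norm_num
  have hdet : ∀ s ∈ Set.Icc (0:ℝ) 1, IsUnit (A s).det :=
    fun s hs => (Matrix.isUnit_iff_isUnit_det _).1 (hAunit s hs)
  have hAAinv : ∀ s ∈ Set.Icc (0:ℝ) 1, A s * (A s)⁻¹ = 1 :=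
    fun s hs => Matrix.mul_nonsing_inv _ (hdet s hs)
  obtain ⟨g, hgdef⟩ : ∃ g : ℝ → ℝ,
      ∀ s, g s = Real.sqrt (frobeniusNormSq ((A s)⁻¹ * A' s)) := ⟨_, fun _ => rfl⟩
  obtain ⟨q, hqdef⟩ : ∃ q : ℝ → ℝ, ∀ s, q s =
      ((A s)⁻¹ *ᵥ m' s) ⬝ᵥ ((A s)⁻¹ *ᵥ m' s) + frobeniusNormSq ((A s)⁻¹ * A' s) :=
    ⟨_, fun _ => rfl⟩
  have hfunq : (fun s => ((A s)⁻¹ *ᵥ m' s) ⬝ᵥ ((A s)⁻¹ *ᵥ m' s)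
      + frobeniusNormSq ((A s)⁻¹ * A' s)) = q := funext fun s => (hqdef s).symm
  rw [hfunq] at hIfin hIdef
  have hds : ∀ (v : Fin d → ℝ), 0 ≤ v ⬝ᵥ v :=
    fun v => Finset.sum_nonneg (fun i _ => mul_self_nonneg _)
  have hq0 : ∀ s, 0 ≤ q s := fun s => by
    rw [hqdef]; exact add_nonneg (hds _) (frob_nonneg _)
  have hfrob_le_q : ∀ s, frobeniusNormSq ((A s)⁻¹ * A' s) ≤ q s := fun s => by
    rw [hqdef]; linarith [hds ((A s)⁻¹ *ᵥ m' s)]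
  have hg_sq : ∀ s, g s ^ 2 = frobeniusNormSq ((A s)⁻¹ * A' s) := fun s => by
    rw [hgdef]; exact Real.sq_sqrt (frob_nonneg _)
  have hg0 : ∀ s, 0 ≤ g s := fun s => by rw [hgdef]; exact Real.sqrt_nonneg _
  -- continuity of A and A⁻¹
  have hAc : ContinuousOn A (Set.Icc (0:ℝ) 1) := by
    have : ContinuousOn (fun s => A 0 + ∫ r in (0:ℝ)..s, A' r) (Set.uIcc 0 1) :=
      continuousOn_const.add
        (intervalIntegral.continuousOn_primitive_interval' hA'int Set.left_mem_uIcc)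
    rw [Set.uIcc_of_le h01] at this
    exact this.congr hA
  have hdet0 : ∀ s ∈ Set.Icc (0:ℝ) 1, (A s).det ≠ 0 := fun s hs => (hdet s hs).ne_zero
  have hAinvc : ContinuousOn (fun s => (A s)⁻¹) (Set.Icc (0:ℝ) 1) := by
    have h1 : ContinuousOn (fun s => ((A s).det)⁻¹ • (A s).adjugate) (Set.Icc (0:ℝ) 1) :=
      ((continuous_id.matrix_det.comp_continuousOn hAc).inv₀ hdet0).smul
        (continuous_id.matrix_adjugate.comp_continuousOn hAc)
    exact h1.congr (fun s _ => by rw [Matrix.inv_def, Ring.inverse_eq_inv'])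
  -- measurability
  have hA'm : AEStronglyMeasurable A' (volume.restrict (Set.Ioc (0:ℝ) 1)) :=
    hA'int.1.aestronglyMeasurable
  have hAim : AEStronglyMeasurable (fun s => (A s)⁻¹)
      (volume.restrict (Set.Ioc (0:ℝ) 1)) :=
    by
      haveI : TopologicalSpace.PseudoMetrizableSpace (Matrix (Fin d) (Fin d) ℝ) :=
        inferInstanceAs (TopologicalSpace.PseudoMetrizableSpace (Fin d → Fin d → ℝ))
      exact (hAinvc.mono Set.Ioc_subset_Icc_self).aestronglyMeasurable measurableSet_Ioc
  have hBm : AEStronglyMeasurable (fun s => (A s)⁻¹ * A' s)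
      (volume.restrict (Set.Ioc (0:ℝ) 1)) := by
    have hcont : Continuous (fun p : Matrix (Fin d) (Fin d) ℝ × Matrix (Fin d) (Fin d) ℝ
        => p.1 * p.2) := continuous_fst.matrix_mul continuous_snd
    exact hcont.comp_aestronglyMeasurable (hAim.prodMk hA'm)
  have hfrobc : Continuous (fun M : Matrix (Fin d) (Fin d) ℝ => frobeniusNormSq M) := by
    show Continuous fun M : Matrix (Fin d) (Fin d) ℝ => Matrix.trace (Mᵀ * M)
    exact (continuous_id.matrix_transpose.matrix_mul continuous_id).matrix_trace
  have hFm : AEStronglyMeasurable (fun s => frobeniusNormSq ((A s)⁻¹ * A' s))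
      (volume.restrict (Set.Ioc (0:ℝ) 1)) := hfrobc.comp_aestronglyMeasurable hBm
  have hgm : AEStronglyMeasurable g (volume.restrict (Set.Ioc (0:ℝ) 1)) := by
    have := Real.continuous_sqrt.comp_aestronglyMeasurable hFm
    exact this.congr (Filter.Eventually.of_forall (fun s => (hgdef s).symm))
  -- integrability of g and g²
  have hFint : Integrable (fun s => frobeniusNormSq ((A s)⁻¹ * A' s))
      (volume.restrict (Set.Ioc (0:ℝ) 1)) := by
    apply MeasureTheory.Integrable.mono' hIfin.1 hFm
    exact Filter.Eventually.of_forall (fun s => by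
      rw [Real.norm_eq_abs, abs_of_nonneg (frob_nonneg _)]; exact hfrob_le_q s)
  have hempty : IntegrableOn g (Set.Ioc (1:ℝ) 0) volume := by
    rw [Set.Ioc_eq_empty (by norm_num)]; exact integrableOn_empty
  have hg2int : Integrable (fun s => g s ^ 2) (volume.restrict (Set.Ioc (0:ℝ) 1)) :=
    hFint.congr (Filter.Eventually.of_forall (fun s => (hg_sq s).symm))
  have hg2ii : IntervalIntegrable (fun s => g s ^ 2) volume 0 1 :=
    ⟨hg2int, by rw [Set.Ioc_eq_empty (by norm_num)]; exact integrableOn_empty⟩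
  have hgint : Integrable g (volume.restrict (Set.Ioc (0:ℝ) 1)) := by
    apply MeasureTheory.Integrable.mono' (g := fun s => (1/2) * (g s ^ 2 + 1)) ?_ hgm
    · exact Filter.Eventually.of_forall (fun s => by
        rw [Real.norm_eq_abs, abs_of_nonneg (hg0 s)]
        nlinarith [sq_nonneg (g s - 1)])
    · exact Integrable.const_mul (hg2int.add
        ((MeasureTheory.integrableOn_const measure_Ioc_lt_top.ne) :
          IntegrableOn (fun _ => (1:ℝ)) _ _)) _
  have hgii : IntervalIntegrable g volume 0 1 := ⟨hgint, hempty⟩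
  -- integral bounds
  have hInn : 0 ≤ I := by
    rw [hIdef]
    exact intervalIntegral.integral_nonneg h01 (fun u _ => hq0 u)
  have hs0 : 0 ≤ Real.sqrt I := Real.sqrt_nonneg I
  have hJle : (∫ s in (0:ℝ)..1, g s ^ 2) ≤ I := by
    rw [hIdef]
    exact intervalIntegral.integral_mono_on h01 hg2ii hIfin
      (fun s _ => by rw [hg_sq]; exact hfrob_le_q s)
  have hJ0 : 0 ≤ ∫ s in (0:ℝ)..1, g s ^ 2 :=
    intervalIntegral.integral_nonneg h01 (fun u _ => sq_nonneg _)
  have hg15 : (∫ s in (0:ℝ)..1, g s) ≤ Real.sqrt I := by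
    apply le_of_forall_pos_le_add
    intro ε hε
    have hlampos : 0 < Real.sqrt I + ε := by positivity
    obtain ⟨lam, hlamdef⟩ : ∃ lam : ℝ, lam = (Real.sqrt I + ε)⁻¹ := ⟨_, rfl⟩
    have hlam : 0 < lam := by rw [hlamdef]; exact inv_pos.2 hlampos
    have hlamval : lam * (Real.sqrt I + ε) = 1 := by
      rw [hlamdef]; exact inv_mul_cancel₀ (ne_of_gt hlampos)
    have hinv : lam⁻¹ = Real.sqrt I + ε := by rw [hlamdef, inv_inv]
    have hbd : ∀ s ∈ Set.Icc (0:ℝ) 1, g s ≤ (lam/2) * g s ^ 2 + lam⁻¹/2 := by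
      intro s _
      have hlli := mul_inv_cancel₀ (ne_of_gt hlam)
      nlinarith [sq_nonneg (lam * g s - 1), hlam, mul_pos hlam hlam]
    have hmono := intervalIntegral.integral_mono_on h01 hgii
      ((hg2ii.const_mul (lam/2)).add intervalIntegrable_const) hbd
    rw [intervalIntegral.integral_add (hg2ii.const_mul (lam/2)) intervalIntegrable_const,
      intervalIntegral.integral_const_mul, intervalIntegral.integral_const] at hmono
    simp only [sub_zero, one_smul, smul_eq_mul] at hmono
    have hIs : Real.sqrt I * Real.sqrt I = I := Real.mul_self_sqrt hInn
    have h1 : lam * I ≤ Real.sqrt I := by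
      have h2 : I ≤ Real.sqrt I * (Real.sqrt I + ε) := by nlinarith
      calc lam * I ≤ lam * (Real.sqrt I * (Real.sqrt I + ε)) :=
            mul_le_mul_of_nonneg_left h2 hlam.le
        _ = Real.sqrt I * (lam * (Real.sqrt I + ε)) := by ring
        _ = Real.sqrt I := by rw [hlamval, mul_one]
    have h3 : lam * (∫ s in (0:ℝ)..1, g s ^ 2) ≤ lam * I :=
      mul_le_mul_of_nonneg_left hJle hlam.le
    linarith
  have hGb : ∀ t ∈ Set.Icc (0:ℝ) 1,
      (∫ s in (0:ℝ)..t, g s) ≤ Real.sqrt I ∧ 0 ≤ ∫ s in (0:ℝ)..t, g s := by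
    intro t ht
    have hg1t : IntervalIntegrable g volume 0 t := hgii.mono_set (by
      rw [Set.uIcc_of_le ht.1, Set.uIcc_of_le h01]
      exact Set.Icc_subset_Icc le_rfl ht.2)
    have hgt1 : IntervalIntegrable g volume t 1 := hgii.mono_set (by
      rw [Set.uIcc_of_le ht.2, Set.uIcc_of_le h01]
      exact Set.Icc_subset_Icc ht.1 le_rfl)
    have hadd := intervalIntegral.integral_add_adjacent_intervals hg1t hgt1
    have hpos2 : 0 ≤ ∫ s in t..1, g s :=
      intervalIntegral.integral_nonneg ht.2 (fun u _ => hg0 u)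
    have hpos1 : 0 ≤ ∫ s in (0:ℝ)..t, g s :=
      intervalIntegral.integral_nonneg ht.1 (fun u _ => hg0 u)
    exact ⟨by linarith, hpos1⟩
  -- the key scalar estimate
  have key : ∀ x : Fin d → ℝ, ∀ t ∈ Set.Icc (0:ℝ) 1,
      Real.exp (-(2 * Real.sqrt I)) * (((A 0)ᵀ *ᵥ x) ⬝ᵥ ((A 0)ᵀ *ᵥ x))
          ≤ ((A t)ᵀ *ᵥ x) ⬝ᵥ ((A t)ᵀ *ᵥ x)
      ∧ ((A t)ᵀ *ᵥ x) ⬝ᵥ ((A t)ᵀ *ᵥ x)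
          ≤ Real.exp (2 * Real.sqrt I) * (((A 0)ᵀ *ᵥ x) ⬝ᵥ ((A 0)ᵀ *ᵥ x)) := by
    intro x
    -- coordinate continuous linear functionals
    have hL : ∀ i : Fin d, ∃ Lc : Matrix (Fin d) (Fin d) ℝ →L[ℝ] ℝ,
        ∀ M, Lc M = (Mᵀ *ᵥ x) i := by
      intro i
      refine ⟨LinearMap.toContinuousLinearMap
        { toFun := fun M => (Mᵀ *ᵥ x) i
          map_add' := fun M N => by
            simp [Matrix.transpose_add, Matrix.add_mulVec]
          map_smul' := fun c M => by
            simp [Matrix.transpose_smul, Matrix.smul_mulVec] }, fun M => rfl⟩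
    choose Lc hLc using hL
    have hφint : ∀ i, IntervalIntegrable (fun s => Lc i (A' s)) volume 0 1 :=
      fun i => ⟨(Lc i).integrable_comp hA'int.1, (Lc i).integrable_comp hA'int.2⟩
    have hwform : ∀ i : Fin d, ∀ s ∈ Set.Icc (0:ℝ) 1,
        Lc i (A s) = Lc i (A 0) + ∫ r in (0:ℝ)..s, Lc i (A' r) := by
      intro i s hs
      have hsubint : @IntervalIntegrable _ UniformSpace.toTopologicalSpace NormedAddGroup.toENormedAddMonoid A' volume 0 s := hA'int.mono_set (by
        rw [Set.uIcc_of_le hs.1, Set.uIcc_of_le h01]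
        exact Set.Icc_subset_Icc le_rfl hs.2)
      rw [hA s hs, map_add]
      exact congrArg _ (ContinuousLinearMap.intervalIntegral_comp_comm (Lc i) hsubint).symm
    have hwcont : ∀ i : Fin d, ContinuousOn (fun s => Lc i (A s)) (Set.Icc (0:ℝ) 1) :=
      fun i => (Lc i).continuous.comp_continuousOn hAc
    have hsq : ∀ i : Fin d, ∀ t ∈ Set.Icc (0:ℝ) 1, Lc i (A t) * Lc i (A t)
        = Lc i (A 0) * Lc i (A 0)
          + ∫ s in (0:ℝ)..t, (Lc i (A' s) * Lc i (A s) + Lc i (A' s) * Lc i (A s)) :=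
      fun i => prod_rule h01 (hφint i) (hφint i) (hwform i) (hwform i)
    obtain ⟨f, hfdef⟩ : ∃ f : ℝ → ℝ, ∀ s, f s = ∑ i, Lc i (A s) * Lc i (A s) :=
      ⟨_, fun _ => rfl⟩
    obtain ⟨Ψ, hΨdef⟩ : ∃ Ψ : ℝ → ℝ, ∀ s, Ψ s
        = ∑ i, (Lc i (A' s) * Lc i (A s) + Lc i (A' s) * Lc i (A s)) :=
      ⟨_, fun _ => rfl⟩
    have hψiint : ∀ i : Fin d, IntervalIntegrable
        (fun s => Lc i (A' s) * Lc i (A s) + Lc i (A' s) * Lc i (A s)) volume 0 1 := by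
      intro i
      have h1 := (hφint i).mul_continuousOn (by
        rw [Set.uIcc_of_le h01]; exact hwcont i)
      exact h1.add h1
    have hΨint : IntervalIntegrable Ψ volume 0 1 := by
      have h' := IntervalIntegrable.sum (μ := volume) (a := (0:ℝ)) (b := 1)
        Finset.univ (f := fun (i : Fin d) s =>
          Lc i (A' s) * Lc i (A s) + Lc i (A' s) * Lc i (A s))
        (fun i _ => hψiint i)
      have heq : (∑ i : Fin d, fun s => Lc i (A' s) * Lc i (A s) + Lc i (A' s) * Lc i (A s))
          = Ψ := by
        funext s
        rw [hΨdef]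
        simp
      rwa [heq] at h'
    have hff : ∀ t ∈ Set.Icc (0:ℝ) 1, f t = f 0 + ∫ s in (0:ℝ)..t, Ψ s := by
      intro t ht
      have hsubt : Set.uIcc (0:ℝ) t ⊆ Set.uIcc (0:ℝ) 1 := by
        rw [Set.uIcc_of_le ht.1, Set.uIcc_of_le h01]
        exact Set.Icc_subset_Icc le_rfl ht.2
      have e1 : (∫ s in (0:ℝ)..t, Ψ s)
          = ∑ i : Fin d, ∫ s in (0:ℝ)..t,
              (Lc i (A' s) * Lc i (A s) + Lc i (A' s) * Lc i (A s)) := by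
        rw [← intervalIntegral.integral_finset_sum
          (fun i _ => (hψiint i).mono_set hsubt)]
        apply intervalIntegral.integral_congr
        intro s _
        rw [hΨdef]
      rw [hfdef, hfdef, e1, ← Finset.sum_add_distrib]
      exact Finset.sum_congr rfl (fun i _ => hsq i t ht)
    have hf0' : ∀ s, 0 ≤ f s := fun s => by
      rw [hfdef]; exact Finset.sum_nonneg (fun i _ => mul_self_nonneg _)
    have hfdot : ∀ s, f s = ((A s)ᵀ *ᵥ x) ⬝ᵥ ((A s)ᵀ *ᵥ x) := fun s => by
      rw [hfdef]
      simp [dotProduct, hLc]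
    have hbound : ∀ s ∈ Set.Icc (0:ℝ) 1, |Ψ s| ≤ 2 * (g s * f s) := by
      intro s hs
      have hA'eq : A' s = A s * ((A s)⁻¹ * A' s) := by
        rw [← Matrix.mul_assoc, hAAinv s hs, Matrix.one_mul]
      have e1 : ∀ i, Lc i (A' s) = ((((A s)⁻¹ * A' s)ᵀ) *ᵥ ((A s)ᵀ *ᵥ x)) i := by
        intro i
        rw [hLc]
        conv_lhs => rw [hA'eq]
        rw [Matrix.transpose_mul, ← Matrix.mulVec_mulVec]
      have hy : Ψ s = 2 * (((((A s)⁻¹ * A' s)ᵀ) *ᵥ ((A s)ᵀ *ᵥ x)) ⬝ᵥ ((A s)ᵀ *ᵥ x)) := by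
        rw [hΨdef]
        simp only [e1, hLc]
        simp [dotProduct, Finset.mul_sum, two_mul, Finset.sum_add_distrib]
      rw [hy]
      have hcs := mat_cs ((((A s)⁻¹ * A' s)ᵀ)) ((A s)ᵀ *ᵥ x)
      rw [frob_transpose] at hcs
      calc |2 * (((((A s)⁻¹ * A' s)ᵀ) *ᵥ ((A s)ᵀ *ᵥ x)) ⬝ᵥ ((A s)ᵀ *ᵥ x))|
          = 2 * |((((A s)⁻¹ * A' s)ᵀ) *ᵥ ((A s)ᵀ *ᵥ x)) ⬝ᵥ ((A s)ᵀ *ᵥ x)| := by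
            rw [abs_mul]; norm_num
        _ ≤ 2 * (Real.sqrt (frobeniusNormSq ((A s)⁻¹ * A' s))
              * (((A s)ᵀ *ᵥ x) ⬝ᵥ ((A s)ᵀ *ᵥ x))) := by linarith
        _ = 2 * (g s * f s) := by rw [← hgdef, ← hfdot]
    intro t ht
    have hup := gronwall_up h01 hΨint hgii (fun s _ => hg0 s) hff (fun s _ => hf0' s)
      (fun s hs => le_trans (le_abs_self _) (hbound s hs)) t ht
    have hlow := gronwall_low h01 hΨint hgii (fun s _ => hg0 s) hff (fun s _ => hf0' s)
      hbound t ht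
    obtain ⟨hGle, hG0⟩ := hGb t ht
    constructor
    · rw [← hfdot 0, ← hfdot t]
      have h1 : f 0 * Real.exp (-(2 * Real.sqrt I))
          ≤ f 0 * Real.exp (-(2 * ∫ s in (0:ℝ)..t, g s)) :=
        mul_le_mul_of_nonneg_left (Real.exp_le_exp.2 (by linarith)) (hf0' 0)
      calc Real.exp (-(2 * Real.sqrt I)) * f 0
          = f 0 * Real.exp (-(2 * Real.sqrt I)) := mul_comm _ _
        _ ≤ f 0 * Real.exp (-(2 * ∫ s in (0:ℝ)..t, g s)) := h1
        _ ≤ f t := hlow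
    · rw [← hfdot 0, ← hfdot t]
      have h1 : f 0 * Real.exp (2 * ∫ s in (0:ℝ)..t, g s)
          ≤ f 0 * Real.exp (2 * Real.sqrt I) :=
        mul_le_mul_of_nonneg_left (Real.exp_le_exp.2 (by linarith)) (hf0' 0)
      calc f t ≤ f 0 * Real.exp (2 * ∫ s in (0:ℝ)..t, g s) := hup
        _ ≤ f 0 * Real.exp (2 * Real.sqrt I) := h1
        _ = Real.exp (2 * Real.sqrt I) * f 0 := mul_comm _ _
  -- conclusion
  intro t ht
  have hherm : ∀ (B C : Matrix (Fin d) (Fin d) ℝ) (c : ℝ),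
      ((B * Bᵀ) - c • (C * Cᵀ)).IsHermitian := by
    intro B C c
    show ((B * Bᵀ) - c • (C * Cᵀ))ᴴ = _
    rw [Matrix.conjTranspose_eq_transpose_of_trivial, Matrix.transpose_sub,
      Matrix.transpose_smul, Matrix.transpose_mul, Matrix.transpose_mul,
      Matrix.transpose_transpose, Matrix.transpose_transpose]
  have hherm2 : ∀ (B C : Matrix (Fin d) (Fin d) ℝ) (c : ℝ),
      (c • (C * Cᵀ) - (B * Bᵀ)).IsHermitian := by
    intro B C c
    show (c • (C * Cᵀ) - (B * Bᵀ))ᴴ = _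
    rw [Matrix.conjTranspose_eq_transpose_of_trivial, Matrix.transpose_sub,
      Matrix.transpose_smul, Matrix.transpose_mul, Matrix.transpose_mul,
      Matrix.transpose_transpose, Matrix.transpose_transpose]
  constructor
  · refine Matrix.posSemidef_iff_dotProduct_mulVec.2 ⟨hherm (A t) (A 0) _, ?_⟩
    intro v
    rw [star_trivial, Matrix.sub_mulVec, dotProduct_sub,
      Matrix.smul_mulVec, dotProduct_smul, quad_eq, quad_eq, smul_eq_mul]
    have hk := (key v t ht).1
    rw [neg_mul] at *
    linarith
  · refine Matrix.posSemidef_iff_dotProduct_mulVec.2 ⟨hherm2 (A t) (A 0) _, ?_⟩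
    intro v
    rw [star_trivial, Matrix.sub_mulVec, dotProduct_sub,
      Matrix.smul_mulVec, dotProduct_smul, quad_eq, quad_eq, smul_eq_mul]
    have hk := (key v t ht).2
    linarith
end

section
/- Conservation of the action density along moment geodesics: Let d ≥ 1, α ∈ ℝ^d, let m : ℝ → ℝ^d be differentiable and C : ℝ → d×d real matrices be twice differentiable with C(t) symmetric positive definite for every t, and suppose the Euler–Lagrange system holds: m'(t) = C(t) α and C''(t) = C'(t) C(t)⁻¹ C'(t) − 2 C(t) (α αᵀ) C(t) for all t, where α αᵀ is the rank-one matrix with entries αᵢ αⱼ. Then the function t ↦ ⟨m'(t), C(t)⁻¹ m'(t)⟩ + ¼ trace( C'(t) C(t)⁻¹ C'(t) C(t)⁻¹ ) is constant on ℝ. -/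
open Matrix

attribute [local instance] Matrix.normedAddCommGroup Matrix.normedSpace


variable {d : ℕ}

lemma hasDerivAt_entry {A : ℝ → Matrix (Fin d) (Fin d) ℝ} {A' : Matrix (Fin d) (Fin d) ℝ} {t : ℝ}
    (h : HasDerivAt A A' t) (i j : Fin d) :
    HasDerivAt (fun s => A s i j) (A' i j) t :=
  hasDerivAt_pi.mp (hasDerivAt_pi.mp h i) j

lemma hasDerivAt_matrix {A : ℝ → Matrix (Fin d) (Fin d) ℝ} {A' : Matrix (Fin d) (Fin d) ℝ} {t : ℝ}
    (h : ∀ i j, HasDerivAt (fun s => A s i j) (A' i j) t) :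
    HasDerivAt A A' t :=
  hasDerivAt_pi.mpr fun i => hasDerivAt_pi.mpr (h i)

lemma matmulD {A B : ℝ → Matrix (Fin d) (Fin d) ℝ} {A' B' : Matrix (Fin d) (Fin d) ℝ} {t : ℝ}
    (hA : HasDerivAt A A' t) (hB : HasDerivAt B B' t) :
    HasDerivAt (fun s => A s * B s) (A' * B t + A t * B') t := by
  apply hasDerivAt_matrix
  intro i j
  simp only [Matrix.mul_apply, Matrix.add_apply]
  rw [← Finset.sum_add_distrib]
  exact HasDerivAt.fun_sum fun k _ => (hasDerivAt_entry hA i k).mul (hasDerivAt_entry hB k j)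

lemma traceD {A : ℝ → Matrix (Fin d) (Fin d) ℝ} {A' : Matrix (Fin d) (Fin d) ℝ} {t : ℝ}
    (h : HasDerivAt A A' t) :
    HasDerivAt (fun s => Matrix.trace (A s)) (Matrix.trace A') t := by
  have := HasDerivAt.fun_sum (u := Finset.univ) (A := fun (i : Fin d) s => A s i i)
    (A' := fun i => A' i i) (fun i _ => hasDerivAt_entry h i i)
  simpa [Matrix.trace, Matrix.diag] using this

lemma detDiff {A : ℝ → Matrix (Fin d) (Fin d) ℝ} {t : ℝ}
    (h : ∀ i j, DifferentiableAt ℝ (fun s => A s i j) t) :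
    DifferentiableAt ℝ (fun s => (A s).det) t := by
  simp only [Matrix.det_apply']
  apply DifferentiableAt.fun_sum
  intro σ _
  exact (differentiableAt_const _).mul (DifferentiableAt.fun_finsetProd (fun i _ => h (σ i) i))

lemma invD {C C' : ℝ → Matrix (Fin d) (Fin d) ℝ}
    (hdet : ∀ t, IsUnit (C t).det)
    (hC : ∀ t, HasDerivAt C (C' t) t) (t : ℝ) :
    HasDerivAt (fun s => (C s)⁻¹) (-((C t)⁻¹ * C' t * (C t)⁻¹)) t := by
  have hent : ∀ i j u, DifferentiableAt ℝ (fun s => C s i j) u :=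
    fun i j u => (hasDerivAt_entry (hC u) i j).differentiableAt
  have hadj : ∀ i j u, DifferentiableAt ℝ (fun s => (C s).adjugate i j) u := by
    intro i j u
    simp only [Matrix.adjugate_apply]
    apply detDiff
    intro k l
    simp only [Matrix.updateRow_apply]
    by_cases hk : k = j
    · simp [hk]
    · simpa [hk] using hent k l u
  have hWdiff : ∀ u, DifferentiableAt ℝ (fun s => (C s)⁻¹) u := by
    intro u
    refine (hasDerivAt_matrix (A' := fun i j => deriv (fun s => (C s)⁻¹ i j) u) fun i j => ?_).differentiableAt
    apply DifferentiableAt.hasDerivAt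
    have he : (fun s => (C s)⁻¹ i j) = fun s => ((C s).det)⁻¹ * (C s).adjugate i j := by
      funext s
      rw [Matrix.inv_def, Matrix.smul_apply, Ring.inverse_eq_inv', smul_eq_mul]
    rw [he]
    exact ((detDiff (fun i j => hent i j u)).inv (hdet u).ne_zero).mul (hadj i j u)
  have hWt := (hWdiff t).hasDerivAt
  set D := deriv (fun s => (C s)⁻¹) t with hD
  have h1 : HasDerivAt (fun s => (C s)⁻¹ * C s) (D * C t + (C t)⁻¹ * C' t) t :=
    matmulD hWt (hC t)
  have h2 : (fun s => (C s)⁻¹ * C s) = fun _ => (1 : Matrix (Fin d) (Fin d) ℝ) :=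
    funext fun s => Matrix.nonsing_inv_mul _ (hdet s)
  rw [h2] at h1
  have h0 : D * C t + (C t)⁻¹ * C' t = 0 := h1.unique (hasDerivAt_const t 1)
  have hDC : D * C t = -((C t)⁻¹ * C' t) := eq_neg_of_add_eq_zero_left h0
  have hfin : D = -((C t)⁻¹ * C' t * (C t)⁻¹) := by
    calc D = D * (C t * (C t)⁻¹) := by rw [Matrix.mul_nonsing_inv _ (hdet t), mul_one]
    _ = (D * C t) * (C t)⁻¹ := by rw [mul_assoc]
    _ = -((C t)⁻¹ * C' t) * (C t)⁻¹ := by rw [hDC]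
    _ = -((C t)⁻¹ * C' t * (C t)⁻¹) := by rw [neg_mul]
  rwa [← hfin]

lemma dot_trace (α : Fin d → ℝ) (M : Matrix (Fin d) (Fin d) ℝ) :
    (M *ᵥ α) ⬝ᵥ α = Matrix.trace (M * Matrix.vecMulVec α α) := by
  simp only [Matrix.trace, Matrix.diag, Matrix.mul_apply, Matrix.vecMulVec_apply,
    dotProduct, Matrix.mulVec, Finset.sum_mul]
  apply Finset.sum_congr rfl
  intro i _
  apply Finset.sum_congr rfl
  intro j _
  ring

lemma keyTrace (A B W Q : Matrix (Fin d) (Fin d) ℝ) (hBW : B * W = 1) (hWB : W * B = 1) :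
    Matrix.trace (A * Q) + (1/4) * Matrix.trace
      ((((A * W * A - 2 * (B * Q * B)) * W + A * -(W * A * W)) * A
          + A * W * (A * W * A - 2 * (B * Q * B))) * W
        + A * W * A * -(W * A * W)) = 0 := by
  have hX : (((A * W * A - 2 * (B * Q * B)) * W + A * -(W * A * W)) * A
          + A * W * (A * W * A - 2 * (B * Q * B))) * W
        + A * W * A * -(W * A * W)
      = -(B * Q * B * W * A * W + A * W * B * Q * B * W
          + (B * Q * B * W * A * W + A * W * B * Q * B * W)) := by
    noncomm_ring
  have h1 : Matrix.trace (B * Q * B * W * A * W) = Matrix.trace (A * Q) := by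
    have e : B * Q * B * W * A * W = (B * Q) * (A * W) := by
      rw [show B * Q * B * W * A * W = (B * Q) * ((B * W) * (A * W)) by noncomm_ring, hBW,
        one_mul]
    rw [e, Matrix.trace_mul_comm]
    congr 1
    rw [show (A * W) * (B * Q) = A * ((W * B) * Q) by noncomm_ring, hWB, one_mul]
  have h2 : Matrix.trace (A * W * B * Q * B * W) = Matrix.trace (A * Q) := by
    rw [show A * W * B * Q * B * W = A * ((W * B) * (Q * (B * W))) by noncomm_ring, hWB, hBW,
      one_mul, mul_one]
  rw [hX]; simp only [Matrix.trace_neg, Matrix.trace_add, h1, h2]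
  ring


/-- Conservation of the action density along moment geodesics: if `m' = C α` and
`C'' = C' C⁻¹ C' - 2 C (α αᵀ) C`, then `⟨m', C⁻¹ m'⟩ + ¼ tr(C' C⁻¹ C' C⁻¹)` is constant. -/
theorem stmt15 (d : ℕ) (hd : 1 ≤ d) (α : Fin d → ℝ)
    (m : ℝ → (Fin d → ℝ)) (C C' C'' : ℝ → Matrix (Fin d) (Fin d) ℝ)
    (hCpos : ∀ t, (C t).PosDef)
    (hm : ∀ t, HasDerivAt m (C t *ᵥ α) t)
    (hC : ∀ t, HasDerivAt C (C' t) t)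
    (hC' : ∀ t, HasDerivAt C' (C'' t) t)
    (hEL : ∀ t, C'' t = C' t * (C t)⁻¹ * C' t
        - 2 * (C t * Matrix.vecMulVec α α * C t)) :
    ∃ k : ℝ, ∀ t : ℝ,
      (C t *ᵥ α) ⬝ᵥ ((C t)⁻¹ *ᵥ (C t *ᵥ α))
        + (1 / 4) * Matrix.trace (C' t * (C t)⁻¹ * C' t * (C t)⁻¹) = k := by
  have hdet : ∀ t, IsUnit (C t).det := fun t => isUnit_iff_ne_zero.mpr (hCpos t).det_pos.ne'
  have hW : ∀ t, HasDerivAt (fun s => (C s)⁻¹) (-((C t)⁻¹ * C' t * (C t)⁻¹)) t := invD hdet hC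
  set f : ℝ → ℝ := fun s => Matrix.trace (C s * Matrix.vecMulVec α α)
      + (1/4) * Matrix.trace (C' s * (C s)⁻¹ * C' s * (C s)⁻¹) with hf
  have hf0 : ∀ t, HasDerivAt f 0 t := by
    intro t
    have step1 := matmulD (hC' t) (hW t)
    have step2 := matmulD step1 (hC' t)
    have step3 := matmulD step2 (hW t)
    have htr := traceD step3
    have ht1 : HasDerivAt (fun s => Matrix.trace (C s * Matrix.vecMulVec α α))
        (Matrix.trace (C' t * Matrix.vecMulVec α α)) t := by
      have := traceD (matmulD (hC t) (hasDerivAt_const t (Matrix.vecMulVec α α)))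
      simpa using this
    have hsum := ht1.add (HasDerivAt.const_mul ((1:ℝ)/4) htr)
    have hzero : Matrix.trace (C' t * Matrix.vecMulVec α α)
        + (1/4) * Matrix.trace
          (((C'' t * (C t)⁻¹ + C' t * -((C t)⁻¹ * C' t * (C t)⁻¹)) * C' t
              + C' t * (C t)⁻¹ * C'' t) * (C t)⁻¹
            + C' t * (C t)⁻¹ * C' t * -((C t)⁻¹ * C' t * (C t)⁻¹)) = 0 := by
      rw [hEL t]
      exact keyTrace (C' t) (C t) ((C t)⁻¹) (Matrix.vecMulVec α α)
        (Matrix.mul_nonsing_inv _ (hdet t)) (Matrix.nonsing_inv_mul _ (hdet t))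
    rw [hzero] at hsum
    exact hsum
  refine ⟨f 0, fun t => ?_⟩
  have hconst := is_const_of_deriv_eq_zero (fun u => (hf0 u).differentiableAt)
    (fun u => (hf0 u).deriv) t 0
  have hmv : (C t)⁻¹ *ᵥ (C t *ᵥ α) = α := by
    rw [Matrix.mulVec_mulVec, Matrix.nonsing_inv_mul _ (hdet t), Matrix.one_mulVec]
  rw [hmv, dot_trace α (C t)]
  exact hconst
end

section
/- Matrix inverse perturbation bounds: Let d ≥ 1 and let B, D be symmetric d×d real matrices with B positive definite, D positive semidefinite, and ½B − D positive semidefinite. Then B + D is positive definite (in particular invertible) and B⁻¹ − B⁻¹ D B⁻¹ ⪯ (B + D)⁻¹ ⪯ B⁻¹ + 2 B⁻¹ D B⁻¹, where X ⪯ Y means that Y − X is positive semidefinite. -/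
open Matrix

private lemma symmDot {n : Type*} [Fintype n] {M : Matrix n n ℝ} (hM : M.IsHermitian)
    (x z : n → ℝ) : x ⬝ᵥ (M *ᵥ z) = (M *ᵥ x) ⬝ᵥ z := by
  rw [dotProduct_mulVec, ← mulVec_transpose, ← conjTranspose_eq_transpose_of_trivial, hM.eq]

/-- If `A` is positive definite, `D ⪰ 0` and `A - D ⪰ 0`, then `D - D A⁻¹ D ⪰ 0`. -/
private lemma auxPSD {n : Type*} [Fintype n] [DecidableEq n] {A D : Matrix n n ℝ}
    (hA : A.PosDef) (hD : D.PosSemidef) (hAD : (A - D).PosSemidef) :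
    (D - D * A⁻¹ * D).PosSemidef := by
  rw [posSemidef_iff_dotProduct_mulVec]
  have hAi : (A⁻¹).PosDef := hA.inv
  have hAAi : A * A⁻¹ = 1 := A.mul_nonsing_inv (isUnit_iff_ne_zero.mpr hA.det_pos.ne')
  have hDt : Dᵀ = D := (conjTranspose_eq_transpose_of_trivial D) ▸ hD.1.eq
  have hAit : (A⁻¹)ᵀ = A⁻¹ := (conjTranspose_eq_transpose_of_trivial A⁻¹) ▸ hAi.1.eq
  constructor
  · refine hD.1.sub ?_
    show _ᴴ = _
    simp [conjTranspose_mul, hDt, hAit, Matrix.mul_assoc]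
  · intro x
    simp only [star_trivial, sub_mulVec, dotProduct_sub]
    set z : n → ℝ := A⁻¹ *ᵥ (D *ᵥ x) with hz
    have hAz : A *ᵥ z = D *ᵥ x := by
      rw [hz, mulVec_mulVec, hAAi, one_mulVec]
    have hDz : (D * A⁻¹ * D) *ᵥ x = D *ᵥ z := by
      simp [hz, ← mulVec_mulVec, Matrix.mul_assoc]
    rw [hDz]
    set t : ℝ := x ⬝ᵥ (D *ᵥ z) with ht
    have h1 : t = z ⬝ᵥ (A *ᵥ z) := by
      rw [ht, symmDot hD.1, hAz, dotProduct_comm]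
    have h2 : z ⬝ᵥ (D *ᵥ z) ≤ z ⬝ᵥ (A *ᵥ z) := by
      have := hAD.dotProduct_mulVec_nonneg z
      simp only [star_trivial, sub_mulVec, dotProduct_sub] at this
      linarith
    have h3 : 0 ≤ (x - z) ⬝ᵥ (D *ᵥ (x - z)) := by simpa using hD.dotProduct_mulVec_nonneg (x - z)
    have h4 : z ⬝ᵥ (D *ᵥ x) = t := by
      rw [ht, symmDot hD.1, dotProduct_comm]
    have h5 : (x - z) ⬝ᵥ (D *ᵥ (x - z)) = x ⬝ᵥ (D *ᵥ x) - 2 * t + z ⬝ᵥ (D *ᵥ z) := by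
      rw [mulVec_sub, dotProduct_sub, sub_dotProduct, sub_dotProduct, h4, ← ht]
      ring
    linarith

/-- Matrix inverse perturbation bounds: if `B ≻ 0`, `D ⪰ 0` and `D ⪯ ½B`, then `B + D`
is positive definite (in particular invertible) and
`B⁻¹ - B⁻¹DB⁻¹ ⪯ (B + D)⁻¹ ⪯ B⁻¹ + 2B⁻¹DB⁻¹`. -/
theorem stmt17 (d : ℕ) (hd : 1 ≤ d)
    (B D : Matrix (Fin d) (Fin d) ℝ)
    (hB : B.PosDef) (hD : D.PosSemidef)
    (hhalf : (((1 : ℝ) / 2) • B - D).PosSemidef) :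
    (B + D).PosDef ∧ IsUnit (B + D) ∧
    ((B + D)⁻¹ - (B⁻¹ - B⁻¹ * D * B⁻¹)).PosSemidef ∧
    ((B⁻¹ + 2 * (B⁻¹ * D * B⁻¹)) - (B + D)⁻¹).PosSemidef := by
  have hA : (B + D).PosDef := hB.add_posSemidef hD
  have hU : IsUnit (B + D) :=
    (isUnit_iff_isUnit_det _).mpr (isUnit_iff_ne_zero.mpr hA.det_pos.ne')
  have hAAi : (B + D) * (B + D)⁻¹ = 1 :=
    (B + D).mul_nonsing_inv (isUnit_iff_ne_zero.mpr hA.det_pos.ne')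
  have hAiA : (B + D)⁻¹ * (B + D) = 1 :=
    (B + D).nonsing_inv_mul (isUnit_iff_ne_zero.mpr hA.det_pos.ne')
  have hBBi : B * B⁻¹ = 1 := B.mul_nonsing_inv (isUnit_iff_ne_zero.mpr hB.det_pos.ne')
  have hBiB : B⁻¹ * B = 1 := B.nonsing_inv_mul (isUnit_iff_ne_zero.mpr hB.det_pos.ne')
  have hAD : ((B + D) - D).PosSemidef := by
    rw [add_sub_cancel_right]; exact hB.posSemidef
  -- the key algebraic identity
  have hkey1 : B * (B + D)⁻¹ * B = B - D + D * (B + D)⁻¹ * D := by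
    calc B * (B + D)⁻¹ * B = ((B + D) - D) * (B + D)⁻¹ * ((B + D) - D) := by
          rw [add_sub_cancel_right]
      _ = (B + D) * ((B + D)⁻¹ * (B + D)) - ((B + D) * (B + D)⁻¹) * D
            - D * ((B + D)⁻¹ * (B + D)) + D * (B + D)⁻¹ * D := by noncomm_ring
      _ = B - D + D * (B + D)⁻¹ * D := by
          rw [hAiA, hAAi, Matrix.mul_one, Matrix.one_mul, Matrix.mul_one]; abel
  have hcancel : B⁻¹ * B * B⁻¹ = B⁻¹ := by rw [hBiB, Matrix.one_mul]
  have key2 : (B + D)⁻¹ = B⁻¹ - B⁻¹ * D * B⁻¹ + B⁻¹ * (D * (B + D)⁻¹ * D) * B⁻¹ := by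
    have h := congrArg (fun M => B⁻¹ * M * B⁻¹) hkey1
    rw [show B⁻¹ * (B * (B + D)⁻¹ * B) * B⁻¹
        = (B⁻¹ * B) * (B + D)⁻¹ * (B * B⁻¹) from by noncomm_ring,
      hBiB, hBBi, Matrix.one_mul, Matrix.mul_one,
      show B⁻¹ * (B - D + D * (B + D)⁻¹ * D) * B⁻¹
        = B⁻¹ * B * B⁻¹ - B⁻¹ * D * B⁻¹ + B⁻¹ * (D * (B + D)⁻¹ * D) * B⁻¹ from by noncomm_ring,
      hcancel] at h
    exact h
  -- PSD building blocks
  have hBi : (B⁻¹).PosDef := hB.inv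
  have hX : (D * (B + D)⁻¹ * D).PosSemidef := by
    have := (hA.inv.posSemidef).conjTranspose_mul_mul_same D
    rwa [hD.1.eq] at this
  have hconj : ∀ {M : Matrix (Fin d) (Fin d) ℝ}, M.PosSemidef →
      (B⁻¹ * M * B⁻¹).PosSemidef := by
    intro M hM
    have := hM.conjTranspose_mul_mul_same B⁻¹
    rwa [hBi.1.eq] at this
  have hBDB : (B⁻¹ * D * B⁻¹).PosSemidef := hconj hD
  refine ⟨hA, hU, ?_, ?_⟩
  · have : (B + D)⁻¹ - (B⁻¹ - B⁻¹ * D * B⁻¹) = B⁻¹ * (D * (B + D)⁻¹ * D) * B⁻¹ := by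
      nth_rewrite 1 [key2]; abel
    rw [this]
    exact hconj hX
  · have heq : (B⁻¹ + 2 * (B⁻¹ * D * B⁻¹)) - (B + D)⁻¹
        = B⁻¹ * (D - D * (B + D)⁻¹ * D) * B⁻¹ + (B⁻¹ * D * B⁻¹ + B⁻¹ * D * B⁻¹) := by
      nth_rewrite 1 [key2]; noncomm_ring
    rw [heq]
    exact (hconj (auxPSD hA hD hAD)).add (hBDB.add hBDB)
end

section
/- Monotone decay of the relaxation profile: For every a > 0, the function f(t) := e^{2t} ( √(1 − e^{−2t} + a e^{−2t}) − 1 )² is nonnegative and non-increasing on [0,∞); in particular f(t) ≤ f(0) = (√a − 1)² for all t ≥ 0. -/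
open Real

lemma stmt18_key (a u v : ℝ) (ha : 0 < a) (hu : 0 < u) (huv : u ≤ v) (hv1 : v ≤ 1) :
    v * (Real.sqrt (1 - u + a * u) - 1) ^ 2 ≤ u * (Real.sqrt (1 - v + a * v) - 1) ^ 2 := by
  have hv0 : 0 < v := lt_of_lt_of_le hu huv
  have hsu : 0 ≤ 1 - u + a * u := by nlinarith
  have hsv : 0 ≤ 1 - v + a * v := by nlinarith
  set A := Real.sqrt (1 - u + a * u) with hA
  set B := Real.sqrt (1 - v + a * v) with hB
  have hA0 : 0 ≤ A := Real.sqrt_nonneg _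
  have hB0 : 0 ≤ B := Real.sqrt_nonneg _
  have hA2 : A ^ 2 = 1 - u + a * u := Real.sq_sqrt hsu
  have hB2 : B ^ 2 = 1 - v + a * v := Real.sq_sqrt hsv
  have hUB : u * B ≤ v * A := by
    have e : (v * A) ^ 2 - (u * B) ^ 2 = (v - u) * (u + v - u * v + a * u * v) := by
      rw [mul_pow, mul_pow, hA2, hB2]; ring
    have hpos : 0 ≤ (v - u) * (u + v - u * v + a * u * v) := by
      apply mul_nonneg (by linarith)
      nlinarith [mul_nonneg hu.le (sub_nonneg.2 hv1), mul_nonneg (mul_nonneg ha.le hu.le) hv0.le]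
    have h1 : (u * B) ^ 2 ≤ (v * A) ^ 2 := by linarith
    calc u * B = Real.sqrt ((u * B) ^ 2) := (Real.sqrt_sq (by positivity)).symm
      _ ≤ Real.sqrt ((v * A) ^ 2) := Real.sqrt_le_sqrt h1
      _ = v * A := Real.sqrt_sq (by positivity)
  have hmain : u * (B + 1) ^ 2 ≤ v * (A + 1) ^ 2 := by nlinarith [hUB, hA2, hB2]
  have hD : 0 < (A + 1) ^ 2 * (B + 1) ^ 2 := by positivity
  rw [← mul_le_mul_iff_of_pos_right hD]
  have eL : v * (A - 1) ^ 2 * ((A + 1) ^ 2 * (B + 1) ^ 2)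
      = ((a - 1) ^ 2 * u * v) * (u * (B + 1) ^ 2) := by
    linear_combination (v * (B + 1) ^ 2 * (A ^ 2 - 1 + (a - 1) * u)) * hA2
  have eR : u * (B - 1) ^ 2 * ((A + 1) ^ 2 * (B + 1) ^ 2)
      = ((a - 1) ^ 2 * u * v) * (v * (A + 1) ^ 2) := by
    linear_combination (u * (A + 1) ^ 2 * (B ^ 2 - 1 + (a - 1) * v)) * hB2
  rw [eL, eR]
  exact mul_le_mul_of_nonneg_left hmain (by positivity)

/-- Monotone decay of the relaxation profile: for `a > 0`, the function
`f(t) = e^{2t} (√(1 - e^{-2t} + a e^{-2t}) - 1)²` is nonnegative and non-increasing on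
`[0, ∞)`; in particular `f t ≤ f 0 = (√a - 1)²` for `t ≥ 0`. -/
theorem stmt18 (a : ℝ) (ha : 0 < a)
    (f : ℝ → ℝ)
    (hf : ∀ t, f t = Real.exp (2 * t) *
      (Real.sqrt (1 - Real.exp (-2 * t) + a * Real.exp (-2 * t)) - 1) ^ 2) :
    (∀ t ∈ Set.Ici (0:ℝ), 0 ≤ f t) ∧
    AntitoneOn f (Set.Ici (0:ℝ)) ∧
    f 0 = (Real.sqrt a - 1) ^ 2 ∧
    (∀ t ∈ Set.Ici (0:ℝ), f t ≤ (Real.sqrt a - 1) ^ 2) := by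
  have hnonneg : ∀ t ∈ Set.Ici (0:ℝ), 0 ≤ f t := by
    intro t _; rw [hf t]; positivity
  have hanti : AntitoneOn f (Set.Ici (0:ℝ)) := by
    intro t₁ ht₁ t₂ ht₂ h12
    rw [Set.mem_Ici] at ht₁ ht₂
    set u := Real.exp (-2 * t₂) with hud
    set v := Real.exp (-2 * t₁) with hvd
    have hu : 0 < u := Real.exp_pos _
    have hv : 0 < v := Real.exp_pos _
    have huv : u ≤ v := Real.exp_le_exp.2 (by linarith)
    have hv1 : v ≤ 1 := by
      rw [hvd, ← Real.exp_zero]; exact Real.exp_le_exp.2 (by linarith)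
    have key := stmt18_key a u v ha hu huv hv1
    have h2 : Real.exp (2 * t₂) * u = 1 := by
      rw [hud, ← Real.exp_add]; norm_num
    have h1 : Real.exp (2 * t₁) * v = 1 := by
      rw [hvd, ← Real.exp_add]; norm_num
    have e2 : Real.exp (2 * t₂) = 1 / u := by field_simp at h2 ⊢; linarith
    have e1 : Real.exp (2 * t₁) = 1 / v := by field_simp at h1 ⊢; linarith
    rw [hf t₂, hf t₁, e2, e1, div_mul_eq_mul_div, div_mul_eq_mul_div,
      div_le_div_iff₀ hu hv]
    nlinarith [key]
  have h0 : f 0 = (Real.sqrt a - 1) ^ 2 := by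
    rw [hf 0]
    norm_num
  refine ⟨hnonneg, hanti, h0, fun t ht => ?_⟩
  calc f t ≤ f 0 := hanti (by norm_num) ht (Set.mem_Ici.1 ht)
    _ = _ := h0
end

section
/- Secant bound for the entropy profile along the eigenvalue flow: For every s > 0 define σ(t) := 1 / (1 − e^{−2t} + e^{−2t}/s) for t ≥ 0. Then for every t ≥ 0: σ(t) − 1 − log σ(t) ≤ max{1, 1/s} · e^{−2t} · ( s − 1 − log s ). -/
open Real

/-- Auxiliary: `2(x-1) ≤ (x+1) log x` for `x ≥ 1`. -/
lemma aux_pade (x : ℝ) (hx : 1 ≤ x) : 2 * (x - 1) ≤ (x + 1) * Real.log x := by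
  set f : ℝ → ℝ := fun y => (y + 1) * Real.log y - 2 * (y - 1) with hf
  have hder : ∀ y : ℝ, 0 < y →
      HasDerivAt f (Real.log y + (y + 1) * y⁻¹ - 2) y := by
    intro y hy
    have h1 : HasDerivAt (fun z : ℝ => z + 1) 1 y := (hasDerivAt_id y).add_const 1
    have h2 : HasDerivAt Real.log y⁻¹ y := Real.hasDerivAt_log hy.ne'
    have h3 := h1.mul h2
    have h4 : HasDerivAt (fun z : ℝ => 2 * (z - 1)) 2 y := by
      simpa using ((hasDerivAt_id y).sub_const 1).const_mul 2
    have h5 := h3.sub h4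
    rw [one_mul] at h5
    exact h5
  have hmono : MonotoneOn f (Set.Ici (1 : ℝ)) := by
    apply monotoneOn_of_deriv_nonneg (convex_Ici 1)
    · intro y hy
      have hy0 : (0 : ℝ) < y := lt_of_lt_of_le one_pos hy
      exact (hder y hy0).differentiableAt.continuousAt.continuousWithinAt
    · intro y hy
      rw [interior_Ici] at hy
      have hy0 : (0 : ℝ) < y := lt_trans one_pos hy
      exact (hder y hy0).differentiableAt.differentiableWithinAt
    · intro y hy
      rw [interior_Ici] at hy
      have hy0 : (0 : ℝ) < y := lt_trans one_pos hy
      rw [(hder y hy0).deriv]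
      have hlog : 1 - y⁻¹ ≤ Real.log y := Real.one_sub_inv_le_log_of_pos hy0
      have hyi : 0 < y⁻¹ := inv_pos.mpr hy0
      have : (y + 1) * y⁻¹ = 1 + y⁻¹ := by field_simp
      rw [this]; linarith
  have h1 : f 1 ≤ f x := hmono (by simp) hx hx
  simp [hf] at h1
  linarith

/-- Auxiliary: `2 log d ≤ d - 1/d` for `d ≥ 1`. -/
lemma aux_logB (d : ℝ) (hd : 1 ≤ d) : 2 * Real.log d ≤ d - 1 / d := by
  set g : ℝ → ℝ := fun y => y - y⁻¹ - 2 * Real.log y with hg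
  have hder : ∀ y : ℝ, 0 < y →
      HasDerivAt g (1 - (-(y ^ 2)⁻¹) - 2 * y⁻¹) y := by
    intro y hy
    have h1 : HasDerivAt (fun z : ℝ => z⁻¹) (-(y ^ 2)⁻¹) y := hasDerivAt_inv hy.ne'
    have h2 : HasDerivAt Real.log y⁻¹ y := Real.hasDerivAt_log hy.ne'
    exact ((hasDerivAt_id y).sub h1).sub (h2.const_mul 2)
  have hmono : MonotoneOn g (Set.Ici (1 : ℝ)) := by
    apply monotoneOn_of_deriv_nonneg (convex_Ici 1)
    · intro y hy
      have hy0 : (0 : ℝ) < y := lt_of_lt_of_le one_pos hy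
      exact (hder y hy0).differentiableAt.continuousAt.continuousWithinAt
    · intro y hy
      rw [interior_Ici] at hy
      have hy0 : (0 : ℝ) < y := lt_trans one_pos hy
      exact (hder y hy0).differentiableAt.differentiableWithinAt
    · intro y hy
      rw [interior_Ici] at hy
      have hy0 : (0 : ℝ) < y := lt_trans one_pos hy
      rw [(hder y hy0).deriv]
      have h1 : 1 - (-(y ^ 2)⁻¹) - 2 * y⁻¹ = (1 - y⁻¹) ^ 2 := by
        field_simp; ring
      rw [h1]; positivity
  have h1 : g 1 ≤ g d := hmono (by simp) hd hd
  simp [hg] at h1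
  rw [one_div]
  linarith

/-- Auxiliary: `u ↦ u - 1 - log u` is monotone on `[1, ∞)`. -/
lemma aux_phi_mono {x y : ℝ} (hx : 1 ≤ x) (hxy : x ≤ y) :
    x - 1 - Real.log x ≤ y - 1 - Real.log y := by
  have hx0 : (0 : ℝ) < x := lt_of_lt_of_le one_pos hx
  have hy0 : (0 : ℝ) < y := lt_of_lt_of_le hx0 hxy
  have h1 : Real.log (y / x) ≤ y / x - 1 :=
    Real.log_le_sub_one_of_pos (div_pos hy0 hx0)
  rw [Real.log_div hy0.ne' hx0.ne'] at h1
  have h2 : y / x ≤ y - x + 1 := by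
    rw [div_le_iff₀ hx0]; nlinarith
  linarith

/-- Secant bound for the entropy profile along the eigenvalue flow:
with `σ(t) = 1 / (1 - e^{-2t} + e^{-2t}/s)`, one has
`σ(t) - 1 - log σ(t) ≤ max{1, 1/s} · e^{-2t} · (s - 1 - log s)` for all `t ≥ 0`. -/
theorem stmt19 (s : ℝ) (hs : 0 < s)
    (σ : ℝ → ℝ)
    (hσ : ∀ t, σ t = 1 / (1 - Real.exp (-2 * t) + Real.exp (-2 * t) / s)) :
    ∀ t, 0 ≤ t →
      σ t - 1 - Real.log (σ t) ≤ max 1 (1 / s) * Real.exp (-2 * t) * (s - 1 - Real.log s) := by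
  intro t ht
  rw [hσ t]
  set r : ℝ := Real.exp (-2 * t) with hrdef
  have hr0 : 0 < r := Real.exp_pos _
  have hr1 : r ≤ 1 := Real.exp_le_one_iff.mpr (by linarith)
  set d : ℝ := 1 - r + r / s with hddef
  have hφs : 0 ≤ s - 1 - Real.log s := by
    have := Real.log_le_sub_one_of_pos hs; linarith
  -- AM-GM : (1/s)^r ≤ d
  have hgm : (1 / s) ^ (r : ℝ) ≤ d := by
    have h := Real.geom_mean_le_arith_mean2_weighted hr0.le
      (by linarith : (0:ℝ) ≤ 1 - r) (by positivity : (0:ℝ) ≤ 1 / s)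
      zero_le_one (by ring)
    rw [Real.one_rpow, mul_one, mul_one] at h
    calc (1 / s) ^ (r : ℝ) ≤ r * (1 / s) + (1 - r) := h
      _ = d := by rw [hddef]; ring
  have hsr : (1 / s) ^ (r : ℝ) = 1 / s ^ (r : ℝ) := by
    rw [Real.div_rpow zero_le_one hs.le, Real.one_rpow]
  have hspow : (0 : ℝ) < s ^ (r : ℝ) := Real.rpow_pos_of_pos hs r
  rcases le_or_gt 1 s with h1 | h1
  · -- case s ≥ 1
    have hmax : max 1 (1 / s) = 1 := max_eq_left (by
      rw [div_le_one hs]; exact h1)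
    have hd0 : 0 < d := by
      have hrs : 0 < r / s := div_pos hr0 hs
      rw [hddef]; linarith
    have hd1 : d ≤ 1 := by
      have : r / s ≤ r := by
        rw [div_le_iff₀ hs]; nlinarith
      rw [hddef]; linarith
    have hσ1 : 1 ≤ 1 / d := by
      rw [le_div_iff₀ hd0]; linarith
    have hσ2 : 1 / d ≤ s ^ (r : ℝ) := by
      rw [hsr] at hgm
      rw [div_le_iff₀ hd0]
      rw [div_le_iff₀ hspow] at hgm
      nlinarith
    have hmono := aux_phi_mono hσ1 hσ2
    have hlogsr : Real.log (s ^ (r : ℝ)) = r * Real.log s := Real.log_rpow hs r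
    -- Bernoulli : s^r ≤ 1 + r (s - 1)
    have hbern : s ^ (r : ℝ) ≤ 1 + r * (s - 1) := by
      have h := Real.geom_mean_le_arith_mean2_weighted hr0.le
        (by linarith : (0:ℝ) ≤ 1 - r) hs.le zero_le_one (by ring)
      rw [Real.one_rpow, mul_one, mul_one] at h
      linarith
    rw [hmax, one_mul]
    rw [hlogsr] at hmono
    nlinarith
  · -- case s < 1
    have ha1 : 1 ≤ 1 / s := by rw [le_div_iff₀ hs]; linarith
    have hmax : max 1 (1 / s) = 1 / s := max_eq_right ha1
    have hd1 : 1 ≤ d := by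
      have : r ≤ r / s := by
        rw [le_div_iff₀ hs]; nlinarith
      rw [hddef]; linarith
    have hd0 : 0 < d := lt_of_lt_of_le one_pos hd1
    have hlog1d : Real.log (1 / d) = -Real.log d := by
      rw [one_div, Real.log_inv]
    -- step B
    have hB := aux_logB d hd1
    -- log d ≥ r * log (1/s)
    have hlogd : r * Real.log (1 / s) ≤ Real.log d := by
      have h := Real.log_le_log (Real.rpow_pos_of_pos (by positivity) r) hgm
      rwa [Real.log_rpow (by positivity)] at h
    rw [one_div, Real.log_inv] at hlogd
    -- step A (Padé)
    have stepA : 1 / s - 1 + Real.log s ≤ (1 / s) * (s - 1 - Real.log s) := by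
      have hpade := aux_pade (1 / s) ha1
      rw [one_div, Real.log_inv] at hpade
      have hss : s⁻¹ * s = 1 := inv_mul_cancel₀ hs.ne'
      rw [one_div]
      nlinarith [hpade, hss]
    have hd_eq : d - 1 = r * (1 / s - 1) := by rw [hddef]; ring
    have chain1 : 1 / d - 1 - Real.log (1 / d) ≤ d - 1 - Real.log d := by
      rw [hlog1d]; linarith
    have chain2 : d - 1 - Real.log d ≤ r * (1 / s - 1 + Real.log s) := by
      rw [hd_eq]; nlinarith
    have chain3 : r * (1 / s - 1 + Real.log s) ≤ r * ((1 / s) * (s - 1 - Real.log s)) :=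
      mul_le_mul_of_nonneg_left stepA hr0.le
    rw [hmax]
    calc 1 / d - 1 - Real.log (1 / d)
        ≤ r * ((1 / s) * (s - 1 - Real.log s)) := by linarith
      _ = 1 / s * r * (s - 1 - Real.log s) := by ring
end
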